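/- arXiv:1712.01605 — 4 statements merged into one kernel-verified Lean document; each statement's English description precedes it below -/
import Mathlib

section
/- Let A_1 and A_2 be combinatorially simplicial arrangements in K^{ℓ_1} and K^{ℓ_2} respectively, K any field. Then their product A_1 × A_2 is combinatorially simplicial. -/
open scoped Classical

noncomputable section

section Alg

variable {K : Type*} [Field K] {V : Type*} [AddCommGroup V] [Module K V]

/-- `H` is a linear hyperplane of `V`, i.e. the kernel of a nonzero linear functional. -/
def IsLinHyperplane (H : Submodule K V) : Prop :=
  ∃ f : V →ₗ[K] K, f ≠ 0 ∧ H = LinearMap.ker f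

/-- The intersection lattice `L(A)` of an arrangement `A`:
all intersections of subsets of `A` (the empty intersection being `⊤ = V`). -/
def interLat (A : Finset (Submodule K V)) : Finset (Submodule K V) :=
  A.powerset.image fun S => S.inf id

/-- The localization `A_X = {H ∈ A | X ⊆ H}`. -/
def locArr (A : Finset (Submodule K V)) (X : Submodule K V) : Finset (Submodule K V) :=
  A.filter fun H => X ≤ H

/-- The restriction `A^X = {X ∩ H | H ∈ A, X ⊄ H}`, as an arrangement in `X`. -/
def resArr (A : Finset (Submodule K V)) (X : Submodule K V) : Finset (Submodule K ↥X) :=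
  (A.filter fun H => ¬ X ≤ H).image fun H => H.comap X.subtype

/-- The quotient arrangement `A_X / X = {H/X | H ∈ A, X ⊆ H}` in `V ⧸ X`. -/
def quotArr (A : Finset (Submodule K V)) (X : Submodule K V) : Finset (Submodule K (V ⧸ X)) :=
  (A.filter fun H => X ≤ H).image fun H => H.map X.mkQ

/-- `X` is a modular element of the intersection lattice of `A`. -/
def IsModularFlat (A : Finset (Submodule K V)) (X : Submodule K V) : Prop :=
  X ∈ interLat A ∧ ∀ Y ∈ interLat A, X ⊔ Y ∈ interLat A

/-- `A` is supersolvable: its intersection lattice contains a maximal chain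
`V = X_0 > X_1 > … > X_ℓ` of modular elements (`X_i` of codimension `i`). -/
def IsSupersolvableArr (A : Finset (Submodule K V)) : Prop :=
  ∃ c : ℕ → Submodule K V,
    (∀ i ≤ Module.finrank K V, IsModularFlat A (c i)) ∧
    (∀ i ≤ Module.finrank K V, Module.finrank K (V ⧸ c i) = i) ∧
    ∀ i < Module.finrank K V, c (i + 1) < c i

/-- `A` is reducible: it decomposes as a product along a nontrivial
direct sum decomposition `V = V₁ ⊕ V₂` (each hyperplane contains `V₁` or `V₂`). -/
def IsReducibleArr (A : Finset (Submodule K V)) : Prop :=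
  ∃ V₁ V₂ : Submodule K V, V₁ ≠ ⊥ ∧ V₂ ≠ ⊥ ∧ IsCompl V₁ V₂ ∧
    ∀ H ∈ A, V₁ ≤ H ∨ V₂ ≤ H

/-- `A` and `B` are linearly isomorphic arrangements in `V`. -/
def LinIsoArr (A B : Finset (Submodule K V)) : Prop :=
  ∃ φ : V ≃ₗ[K] V, B = A.image fun H => H.map (φ : V →ₗ[K] V)

/-- `A` and `B` are lattice equivalent: their intersection lattices are isomorphic
as posets (equivalently, as lattices). -/
def LatEquivArr {V₂ : Type*} [AddCommGroup V₂] [Module K V₂]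
    (A : Finset (Submodule K V)) (B : Finset (Submodule K V₂)) : Prop :=
  ∃ e : {X // X ∈ interLat A} ≃ {Y // Y ∈ interLat B},
    ∀ X Y : {X // X ∈ interLat A},
      (X : Submodule K V) ≤ (Y : Submodule K V) ↔
        (e X : Submodule K V₂) ≤ (e Y : Submodule K V₂)

/-- The product of the arrangements `A` in `V` and `B` in `V₂`, in `V × V₂`. -/
def prodArr {V₂ : Type*} [AddCommGroup V₂] [Module K V₂]
    (A : Finset (Submodule K V)) (B : Finset (Submodule K V₂)) :
    Finset (Submodule K (V × V₂)) :=
  A.image (fun H => H.prod (⊤ : Submodule K V₂)) ∪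
    B.image fun H => (⊤ : Submodule K V).prod H

end Alg

section Moebius

variable {K : Type*} [Field K] {V : Type*} [AddCommGroup V] [Module K V]
  [FiniteDimensional K V]

/-- The Möbius function of the intersection lattice of `A`:
`μ(V) = 1` and `μ(X) = - ∑_{Y ⊋ X, Y ∈ L(A)} μ(Y)` for `X ≠ V`. -/
def arrMoebius [FiniteDimensional K V] (A : Finset (Submodule K V)) (X : Submodule K V) : ℤ :=
  if X = ⊤ then 1
  else - ∑ Y ∈ ((interLat A).filter fun Y => X < Y).attach, arrMoebius A Y.1
termination_by Module.finrank K V - Module.finrank K ↥X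
decreasing_by
  have hY := (Finset.mem_filter.mp Y.2).2
  have h1 : Module.finrank K ↥X < Module.finrank K ↥(Y.1) :=
    Submodule.finrank_lt_finrank_of_lt hY
  have h2 : Module.finrank K ↥(Y.1) ≤ Module.finrank K V := Submodule.finrank_le _
  omega

/-- The characteristic polynomial `χ_A(t) = ∑_{X ∈ L(A)} μ(X) t^{dim X}`,
evaluated at the integer `t`. -/
def charPolyAt (A : Finset (Submodule K V)) (t : ℤ) : ℤ :=
  ∑ X ∈ interLat A, arrMoebius A X * t ^ Module.finrank K ↥X

/-- The invariant `s(A) = ℓ⋅|χ_A(-1)| - 2 ∑_{H ∈ A} |χ_{A^H}(-1)|`. -/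
def sInvariant (A : Finset (Submodule K V)) : ℤ :=
  (Module.finrank K V : ℤ) * |charPolyAt A (-1)| -
    2 * ∑ H ∈ A, |charPolyAt (resArr A H) (-1)|

end Moebius

section Top

variable {V : Type*} [AddCommGroup V] [Module ℝ V]

/-- `C` is an open simplicial cone: the set of strictly positive linear
combinations of some basis of `V`. -/
def IsOpenSimplicialCone (C : Set V) : Prop :=
  ∃ b : Module.Basis (Fin (Module.finrank ℝ V)) ℝ V,
    C = {v | ∃ c : Fin (Module.finrank ℝ V) → ℝ, (∀ i, 0 < c i) ∧ v = ∑ i, c i • b i}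

variable [TopologicalSpace V]

/-- `C` is a chamber of `A`: a connected component of the complement of the
union of the hyperplanes of `A`. -/
def IsChamberOf (A : Finset (Submodule ℝ V)) (C : Set V) : Prop :=
  ∃ x ∈ (⋃ H ∈ A, (H : Set V))ᶜ, C = connectedComponentIn ((⋃ H ∈ A, (H : Set V))ᶜ) x

/-- `A` is a simplicial arrangement: every chamber is an open simplicial cone. -/
def IsSimplicialArr (A : Finset (Submodule ℝ V)) : Prop :=
  ∀ C : Set V, IsChamberOf A C → IsOpenSimplicialCone C

/-- `H` is a wall of the chamber `C`: a hyperplane of `A` meeting the closure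
of `C` in a set of dimension `dim V - 1`. -/
def IsWallOf (A : Finset (Submodule ℝ V)) (C : Set V) (H : Submodule ℝ V) : Prop :=
  H ∈ A ∧
    Module.finrank ℝ ↥(Submodule.span ℝ ((H : Set V) ∩ closure C)) + 1 = Module.finrank ℝ V

/-- `α` is a basis for the chamber `C`: a family of linear forms, one vanishing on
each wall of `C`, with `C = ⋂ᵢ {αᵢ > 0}`. -/
def IsChamberBasis {ℓ : ℕ} (A : Finset (Submodule ℝ V)) (C : Set V)
    (α : Fin ℓ → (V →ₗ[ℝ] ℝ)) : Prop :=
  (∀ i, IsWallOf A C (LinearMap.ker (α i))) ∧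
  (∀ H, IsWallOf A C H → ∃ i, H = LinearMap.ker (α i)) ∧
  (Function.Injective fun i => LinearMap.ker (α i)) ∧
  C = ⋂ i, {v | 0 < α i v}

/-- `C'` is the chamber adjacent to `C` across the wall `H`:
the common wall is `H = ⟨closure C ∩ closure C'⟩`. -/
def IsAdjChamber (A : Finset (Submodule ℝ V)) (C C' : Set V) (H : Submodule ℝ V) : Prop :=
  IsChamberOf A C' ∧ C' ≠ C ∧ Submodule.span ℝ (closure C ∩ closure C') = H

/-- The Coxeter graph of a chamber with basis `α`: vertices `1, …, ℓ`, with an edge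
`{i, j}` whenever `|A_{αᵢ^⊥ ∩ αⱼ^⊥}| ≥ 3`. -/
def coxGraph {ℓ : ℕ} (A : Finset (Submodule ℝ V)) (α : Fin ℓ → (V →ₗ[ℝ] ℝ)) :
    SimpleGraph (Fin ℓ) :=
  SimpleGraph.fromRel fun i j =>
    3 ≤ (locArr A (LinearMap.ker (α i) ⊓ LinearMap.ker (α j))).card

end Top

section Concrete

/-- The `i`-th coordinate functional on `ℝ^ℓ`. -/
def coordFn (ℓ : ℕ) (i : Fin ℓ) : (Fin ℓ → ℝ) →ₗ[ℝ] ℝ := LinearMap.proj i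

/-- The essential braid arrangement `A(A_ℓ)` in `ℝ^ℓ`:
`{ker(xᵢ - xⱼ) | i < j} ∪ {ker xᵢ}` (the braid arrangement of `ℝ^{ℓ+1}` made essential). -/
def braidArr (ℓ : ℕ) : Finset (Submodule ℝ (Fin ℓ → ℝ)) :=
  ((Finset.univ : Finset (Fin ℓ × Fin ℓ)).filter fun p => p.1 < p.2).image
      (fun p => LinearMap.ker (coordFn ℓ p.1 - coordFn ℓ p.2)) ∪
    (Finset.univ : Finset (Fin ℓ)).image fun i => LinearMap.ker (coordFn ℓ i)

/-- The reflection arrangement `A(C_ℓ)` in `ℝ^ℓ`: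
`{ker(xᵢ - xⱼ), ker(xᵢ + xⱼ) | i < j} ∪ {ker xᵢ}`. -/
def typeCArr (ℓ : ℕ) : Finset (Submodule ℝ (Fin ℓ → ℝ)) :=
  ((Finset.univ : Finset (Fin ℓ × Fin ℓ)).filter fun p => p.1 < p.2).image
      (fun p => LinearMap.ker (coordFn ℓ p.1 - coordFn ℓ p.2)) ∪
  ((Finset.univ : Finset (Fin ℓ × Fin ℓ)).filter fun p => p.1 < p.2).image
      (fun p => LinearMap.ker (coordFn ℓ p.1 + coordFn ℓ p.2)) ∪
    (Finset.univ : Finset (Fin ℓ)).image fun i => LinearMap.ker (coordFn ℓ i)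

/-- The linear functional on `ℝ³` with coefficient vector `(a, b, c)`. -/
def fn3 (a b c : ℝ) : (Fin 3 → ℝ) →ₗ[ℝ] ℝ :=
  a • coordFn 3 0 + b • coordFn 3 1 + c • coordFn 3 2

/-- The arrangement `A(2n, 1)` in `ℝ³`, with normal vectors
`(-sin(πk/n), cos(πk/n), 0)` for `k = 0, …, n-1` and
`(cos(π(2j+1)/n), sin(π(2j+1)/n), 1)` for `j = 0, …, n-1`. -/
def A2n1Arr (n : ℕ) : Finset (Submodule ℝ (Fin 3 → ℝ)) :=
  (Finset.range n).image (fun k =>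
      LinearMap.ker (fn3 (-Real.sin (Real.pi * (k : ℝ) / (n : ℝ)))
        (Real.cos (Real.pi * (k : ℝ) / (n : ℝ))) 0)) ∪
    (Finset.range n).image fun j =>
      LinearMap.ker (fn3 (Real.cos (Real.pi * (2 * (j : ℝ) + 1) / (n : ℝ)))
        (Real.sin (Real.pi * (2 * (j : ℝ) + 1) / (n : ℝ))) 1)

/-- The arrangement `A(4m+1, 1) = A(4m, 1) ∪ {(0,0,1)^⊥}` in `ℝ³`. -/
def A4m1Arr (m : ℕ) : Finset (Submodule ℝ (Fin 3 → ℝ)) :=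
  insert (LinearMap.ker (fn3 0 0 1)) (A2n1Arr (2 * m))

end Concrete

end


noncomputable section

namespace CS

variable {K : Type*} [Field K] {V : Type*} [AddCommGroup V] [Module K V]
  {W : Type*} [AddCommGroup W] [Module K W]

lemma top_mem_interLat (A : Finset (Submodule K V)) : ⊤ ∈ interLat A :=
  Finset.mem_image.mpr ⟨∅, Finset.empty_mem_powerset A, Finset.inf_empty⟩

lemma mem_interLat_iff {A : Finset (Submodule K V)} {X : Submodule K V} :
    X ∈ interLat A ↔ ∃ S ⊆ A, S.inf id = X := by
  simp [interLat, Finset.mem_image, Finset.mem_powerset]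

lemma arrMoebius_def [FiniteDimensional K V] (A : Finset (Submodule K V)) (X : Submodule K V) :
    arrMoebius A X = if X = ⊤ then 1
      else -∑ Y ∈ (interLat A).filter (fun Y => X < Y), arrMoebius A Y := by
  rw [arrMoebius]
  congr 1
  rw [Finset.sum_attach]

lemma arrMoebius_top [FiniteDimensional K V] (A : Finset (Submodule K V)) :
    arrMoebius A ⊤ = 1 := by rw [arrMoebius_def, if_pos rfl]

lemma sum_arrMoebius [FiniteDimensional K V] (A : Finset (Submodule K V)) {X : Submodule K V}
    (hX : X ∈ interLat A) :
    ∑ Y ∈ (interLat A).filter (fun Y => X ≤ Y), arrMoebius A Y = if X = ⊤ then 1 else 0 := by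
  by_cases hT : X = ⊤
  · subst hT
    rw [if_pos rfl]
    have hf : (interLat A).filter (fun Y => ⊤ ≤ Y) = {⊤} := by
      ext Y
      simp only [Finset.mem_filter, Finset.mem_singleton, top_le_iff]
      exact ⟨fun h => h.2, fun h => ⟨h ▸ top_mem_interLat A, h⟩⟩
    rw [hf, Finset.sum_singleton, arrMoebius_top]
  · rw [if_neg hT]
    have hsplit : (interLat A).filter (fun Y => X ≤ Y)
        = insert X ((interLat A).filter (fun Y => X < Y)) := by
      ext Y
      simp only [Finset.mem_filter, Finset.mem_insert]
      constructor
      · rintro ⟨hY, hle⟩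
        rcases lt_or_eq_of_le hle with h | h
        · exact Or.inr ⟨hY, h⟩
        · exact Or.inl h.symm
      · rintro (h | ⟨hY, hlt⟩)
        · subst h; exact ⟨hX, le_rfl⟩
        · exact ⟨hY, hlt.le⟩
    rw [hsplit, Finset.sum_insert (by simp [Finset.mem_filter]), arrMoebius_def, if_neg hT]
    ring

end CS

namespace CS

variable {K : Type*} [Field K] {V : Type*} [AddCommGroup V] [Module K V]
  {W : Type*} [AddCommGroup W] [Module K W]

section Congr

variable [FiniteDimensional K V] [FiniteDimensional K W]
  (A : Finset (Submodule K V)) (B : Finset (Submodule K W))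
  (Φ : Submodule K V → Submodule K W)

lemma moebius_congr
    (hmem : ∀ X ∈ interLat A, Φ X ∈ interLat B)
    (hsurj : ∀ Z ∈ interLat B, ∃ X ∈ interLat A, Φ X = Z)
    (hord : ∀ X ∈ interLat A, ∀ Y ∈ interLat A, (X ≤ Y ↔ Φ X ≤ Φ Y)) :
    ∀ X ∈ interLat A, arrMoebius B (Φ X) = arrMoebius A X := by
  have hinj : ∀ X ∈ interLat A, ∀ Y ∈ interLat A, Φ X = Φ Y → X = Y := by
    intro X hX Y hY h
    exact le_antisymm ((hord X hX Y hY).mpr h.le) ((hord Y hY X hX).mpr h.ge)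
  have htop : Φ ⊤ = ⊤ := by
    obtain ⟨X₀, hX₀, hΦ⟩ := hsurj ⊤ (top_mem_interLat B)
    exact top_le_iff.mp (hΦ ▸ (hord X₀ hX₀ ⊤ (top_mem_interLat A)).mp le_top)
  have htop_iff : ∀ X ∈ interLat A, (Φ X = ⊤ ↔ X = ⊤) := by
    intro X hX
    exact ⟨fun h => hinj X hX ⊤ (top_mem_interLat A) (h.trans htop.symm),
      fun h => h ▸ htop⟩
  have key : ∀ n : ℕ, ∀ X ∈ interLat A, ((interLat A).filter fun Y => X < Y).card ≤ n →
      arrMoebius B (Φ X) = arrMoebius A X := by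
    intro n
    induction n with
    | zero =>
      intro X hX hcard
      by_cases hXT : X = ⊤
      · subst hXT; rw [htop, arrMoebius_top, arrMoebius_top]
      · exfalso
        have : ⊤ ∈ (interLat A).filter fun Y => X < Y :=
          Finset.mem_filter.mpr ⟨top_mem_interLat A, Ne.lt_top hXT⟩
        have := Finset.card_pos.mpr ⟨⊤, this⟩
        omega
    | succ n ih =>
      intro X hX hcard
      by_cases hXT : X = ⊤
      · subst hXT; rw [htop, arrMoebius_top, arrMoebius_top]
      · have hΦT : Φ X ≠ ⊤ := fun h => hXT ((htop_iff X hX).mp h)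
        rw [arrMoebius_def B, arrMoebius_def A, if_neg hΦT, if_neg hXT]
        congr 1
        have himg : (interLat B).filter (fun Z => Φ X < Z)
            = ((interLat A).filter fun Y => X < Y).image Φ := by
          ext Z
          simp only [Finset.mem_filter, Finset.mem_image]
          constructor
          · rintro ⟨hZ, hlt⟩
            obtain ⟨Y, hY, rfl⟩ := hsurj Z hZ
            refine ⟨Y, ⟨hY, lt_of_le_of_ne ((hord X hX Y hY).mpr hlt.le) ?_⟩, rfl⟩
            rintro rfl; exact hlt.ne rfl
          · rintro ⟨Y, ⟨hY, hlt⟩, rfl⟩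
            refine ⟨hmem Y hY, lt_of_le_of_ne ((hord X hX Y hY).mp hlt.le) ?_⟩
            intro h; exact hlt.ne (hinj X hX Y hY h)
        rw [himg, Finset.sum_image (fun Y hY Z hZ h =>
          hinj _ (Finset.mem_filter.mp hY).1 _ (Finset.mem_filter.mp hZ).1 h)]
        apply Finset.sum_congr rfl
        intro Y hY
        obtain ⟨hYL, hXY⟩ := Finset.mem_filter.mp hY
        apply ih Y hYL
        have hsub : (interLat A).filter (fun Z => Y < Z)
            ⊆ ((interLat A).filter fun Z => X < Z).erase Y := by
          intro Z hZ
          obtain ⟨hZL, hYZ⟩ := Finset.mem_filter.mp hZ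
          exact Finset.mem_erase.mpr ⟨fun h => (h ▸ hYZ).ne rfl,
            Finset.mem_filter.mpr ⟨hZL, hXY.trans hYZ⟩⟩
        have h1 := Finset.card_le_card hsub
        have h2 := Finset.card_erase_of_mem hY
        omega
  intro X hX
  exact key _ X hX le_rfl

lemma charPolyAt_congr
    (hmem : ∀ X ∈ interLat A, Φ X ∈ interLat B)
    (hsurj : ∀ Z ∈ interLat B, ∃ X ∈ interLat A, Φ X = Z)
    (hord : ∀ X ∈ interLat A, ∀ Y ∈ interLat A, (X ≤ Y ↔ Φ X ≤ Φ Y))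
    (hrank : ∀ X ∈ interLat A, Module.finrank K ↥(Φ X) = Module.finrank K ↥X)
    (t : ℤ) : charPolyAt B t = charPolyAt A t := by
  have hinj : ∀ X ∈ interLat A, ∀ Y ∈ interLat A, Φ X = Φ Y → X = Y := by
    intro X hX Y hY h
    exact le_antisymm ((hord X hX Y hY).mpr h.le) ((hord Y hY X hX).mpr h.ge)
  have hμ := moebius_congr A B Φ hmem hsurj hord
  have hIL : interLat B = (interLat A).image Φ := by
    ext Z
    simp only [Finset.mem_image]
    exact ⟨fun hZ => hsurj Z hZ, by rintro ⟨X, hX, rfl⟩; exact hmem X hX⟩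
  rw [charPolyAt, charPolyAt, hIL, Finset.sum_image hinj]
  exact Finset.sum_congr rfl fun X hX => by rw [hμ X hX, hrank X hX]

end Congr

end CS

namespace CS

variable {K : Type*} [Field K] {V : Type*} [AddCommGroup V] [Module K V]
  {W : Type*} [AddCommGroup W] [Module K W]

lemma prod_le_prod_iff {X₁ X₂ : Submodule K V} {Y₁ Y₂ : Submodule K W} :
    X₁.prod Y₁ ≤ X₂.prod Y₂ ↔ X₁ ≤ X₂ ∧ Y₁ ≤ Y₂ := by
  constructor
  · intro h
    constructor
    · intro x hx
      exact (Submodule.mem_prod.mp (h (Submodule.mem_prod.mpr ⟨hx, Y₁.zero_mem⟩ :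
        ((x, 0) : V × W) ∈ X₁.prod Y₁))).1
    · intro y hy
      exact (Submodule.mem_prod.mp (h (Submodule.mem_prod.mpr ⟨X₁.zero_mem, hy⟩ :
        ((0, y) : V × W) ∈ X₁.prod Y₁))).2
  · rintro ⟨h1, h2⟩ z hz
    obtain ⟨hz1, hz2⟩ := Submodule.mem_prod.mp hz
    exact Submodule.mem_prod.mpr ⟨h1 hz1, h2 hz2⟩

lemma prod_eq_prod_iff {X₁ X₂ : Submodule K V} {Y₁ Y₂ : Submodule K W} :
    X₁.prod Y₁ = X₂.prod Y₂ ↔ X₁ = X₂ ∧ Y₁ = Y₂ := by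
  constructor
  · intro h
    obtain ⟨h1, h2⟩ := prod_le_prod_iff.mp h.le
    obtain ⟨h3, h4⟩ := prod_le_prod_iff.mp h.ge
    exact ⟨le_antisymm h1 h3, le_antisymm h2 h4⟩
  · rintro ⟨rfl, rfl⟩; rfl

lemma prod_inj : Function.Injective
    (fun p : Submodule K V × Submodule K W => p.1.prod p.2) := by
  rintro ⟨X₁, Y₁⟩ ⟨X₂, Y₂⟩ h
  obtain ⟨h1, h2⟩ := prod_eq_prod_iff.mp h
  simp only [Prod.mk.injEq]
  exact ⟨h1, h2⟩

lemma prod_eq_top_iff {X : Submodule K V} {Y : Submodule K W} :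
    X.prod Y = ⊤ ↔ X = ⊤ ∧ Y = ⊤ := by
  exact ⟨fun h => prod_eq_prod_iff.mp (h.trans Submodule.prod_top.symm),
    by rintro ⟨rfl, rfl⟩; exact Submodule.prod_top⟩

lemma mem_inf_prodArr {A : Finset (Submodule K V)} {B : Finset (Submodule K W)}
    {S : Finset (Submodule K (V × W))} (hS : S ⊆ prodArr A B) :
    S.inf id = ((A.filter fun H => H.prod ⊤ ∈ S).inf id).prod
      ((B.filter fun H => (⊤ : Submodule K V).prod H ∈ S).inf id) := by
  ext ⟨v, w⟩
  rw [Submodule.mem_prod]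
  simp only [Submodule.mem_finsetInf, id_eq]
  constructor
  · intro h
    exact ⟨fun H hH => (Submodule.mem_prod.mp (h _ (Finset.mem_filter.mp hH).2)).1,
      fun H hH => (Submodule.mem_prod.mp (h _ (Finset.mem_filter.mp hH).2)).2⟩
  · rintro ⟨h1, h2⟩ Z hZS
    rcases Finset.mem_union.mp (hS hZS) with h | h
    · obtain ⟨H, hH, rfl⟩ := Finset.mem_image.mp h
      exact Submodule.mem_prod.mpr ⟨h1 H (Finset.mem_filter.mpr ⟨hH, hZS⟩), trivial⟩
    · obtain ⟨H, hH, rfl⟩ := Finset.mem_image.mp h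
      exact Submodule.mem_prod.mpr ⟨trivial, h2 H (Finset.mem_filter.mpr ⟨hH, hZS⟩)⟩

lemma interLat_prodArr (A : Finset (Submodule K V)) (B : Finset (Submodule K W)) :
    interLat (prodArr A B) = ((interLat A) ×ˢ (interLat B)).image (fun p => p.1.prod p.2) := by
  ext Z
  constructor
  · intro hZ
    obtain ⟨S, hS, rfl⟩ := mem_interLat_iff.mp hZ
    rw [mem_inf_prodArr hS]
    refine Finset.mem_image.mpr ⟨(_, _), Finset.mem_product.mpr ⟨?_, ?_⟩, rfl⟩
    · exact mem_interLat_iff.mpr ⟨_, Finset.filter_subset _ _, rfl⟩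
    · exact mem_interLat_iff.mpr ⟨_, Finset.filter_subset _ _, rfl⟩
  · intro hZ
    obtain ⟨⟨X, Y⟩, hp, rfl⟩ := Finset.mem_image.mp hZ
    obtain ⟨hX, hY⟩ := Finset.mem_product.mp hp
    obtain ⟨T₁, hT₁, rfl⟩ := mem_interLat_iff.mp hX
    obtain ⟨T₂, hT₂, rfl⟩ := mem_interLat_iff.mp hY
    refine mem_interLat_iff.mpr ⟨T₁.image (fun H => H.prod ⊤) ∪
      T₂.image (fun H => (⊤ : Submodule K V).prod H), ?_, ?_⟩
    · exact Finset.union_subset_union (Finset.image_subset_image hT₁)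
        (Finset.image_subset_image hT₂)
    · ext ⟨v, w⟩
      rw [Submodule.mem_prod]
      simp only [Submodule.mem_finsetInf, id_eq, Finset.mem_union, Finset.mem_image]
      constructor
      · rintro h
        constructor
        · intro H hH
          exact (Submodule.mem_prod.mp (h _ (Or.inl ⟨H, hH, rfl⟩))).1
        · intro H hH
          exact (Submodule.mem_prod.mp (h _ (Or.inr ⟨H, hH, rfl⟩))).2
      · rintro ⟨h1, h2⟩ Z (⟨H, hH, rfl⟩ | ⟨H, hH, rfl⟩)
        · exact Submodule.mem_prod.mpr ⟨h1 H hH, trivial⟩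
        · exact Submodule.mem_prod.mpr ⟨trivial, h2 H hH⟩

end CS

namespace CS

variable {K : Type*} [Field K] {V : Type*} [AddCommGroup V] [Module K V]
  {W : Type*} [AddCommGroup W] [Module K W]

def prodSubEquiv (X : Submodule K V) (Y : Submodule K W) :
    ↥(X.prod Y) ≃ₗ[K] ↥X × ↥Y where
  toFun z := (⟨(z : V × W).1, (Submodule.mem_prod.mp z.2).1⟩,
    ⟨(z : V × W).2, (Submodule.mem_prod.mp z.2).2⟩)
  invFun p := ⟨((p.1 : V), (p.2 : W)), Submodule.mem_prod.mpr ⟨p.1.2, p.2.2⟩⟩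
  map_add' _ _ := rfl
  map_smul' _ _ := rfl
  left_inv _ := rfl
  right_inv _ := rfl

lemma finrank_prod_sub [FiniteDimensional K V] [FiniteDimensional K W]
    (X : Submodule K V) (Y : Submodule K W) :
    Module.finrank K ↥(X.prod Y) = Module.finrank K ↥X + Module.finrank K ↥Y := by
  rw [(prodSubEquiv X Y).finrank_eq, Module.finrank_prod]

variable [FiniteDimensional K V] [FiniteDimensional K W]

lemma arrMoebius_prodArr (A : Finset (Submodule K V)) (B : Finset (Submodule K W)) :
    ∀ X ∈ interLat A, ∀ Y ∈ interLat B,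
      arrMoebius (prodArr A B) (X.prod Y) = arrMoebius A X * arrMoebius B Y := by
  have key : ∀ n : ℕ, ∀ X ∈ interLat A, ∀ Y ∈ interLat B,
      ((interLat A ×ˢ interLat B).filter fun p => X ≤ p.1 ∧ Y ≤ p.2 ∧ (X, Y) ≠ p).card ≤ n →
      arrMoebius (prodArr A B) (X.prod Y) = arrMoebius A X * arrMoebius B Y := by
    intro n
    induction n with
    | zero =>
      intro X hX Y hY hcard
      by_cases hT : X = ⊤ ∧ Y = ⊤
      · obtain ⟨rfl, rfl⟩ := hT
        rw [Submodule.prod_top, arrMoebius_top, arrMoebius_top, arrMoebius_top]; ring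
      · exfalso
        have hmem : ((⊤ : Submodule K V), (⊤ : Submodule K W)) ∈
            (interLat A ×ˢ interLat B).filter fun p => X ≤ p.1 ∧ Y ≤ p.2 ∧ (X, Y) ≠ p := by
          refine Finset.mem_filter.mpr ⟨Finset.mem_product.mpr
            ⟨top_mem_interLat A, top_mem_interLat B⟩, le_top, le_top, ?_⟩
          intro h
          exact hT ⟨congrArg Prod.fst h, congrArg Prod.snd h⟩
        have := Finset.card_pos.mpr ⟨_, hmem⟩
        omega
    | succ n ih =>
      intro X hX Y hY hcard
      by_cases hT : X = ⊤ ∧ Y = ⊤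
      · obtain ⟨rfl, rfl⟩ := hT
        rw [Submodule.prod_top, arrMoebius_top, arrMoebius_top, arrMoebius_top]; ring
      · have hPT : X.prod Y ≠ ⊤ := fun h => hT (prod_eq_top_iff.mp h)
        rw [arrMoebius_def, if_neg hPT]
        have hfilt : (interLat (prodArr A B)).filter (fun Z => X.prod Y < Z)
            = ((interLat A ×ˢ interLat B).filter
                fun p => X ≤ p.1 ∧ Y ≤ p.2 ∧ (X, Y) ≠ p).image (fun p => p.1.prod p.2) := by
          rw [interLat_prodArr, Finset.filter_image]
          congr 1
          apply Finset.filter_congr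
          intro p _
          simp only [lt_iff_le_and_ne, prod_le_prod_iff, ne_eq, eq_iff_iff]
          constructor
          · rintro ⟨⟨h1, h2⟩, h3⟩
            exact ⟨h1, h2, fun h => h3 (by rw [← h])⟩
          · rintro ⟨h1, h2, h3⟩
            exact ⟨⟨h1, h2⟩, fun h => h3 (prod_inj (a₁ := (X, Y)) h)⟩
        rw [hfilt, Finset.sum_image (fun p _ q _ h => prod_inj h)]
        have hstep : ∑ p ∈ (interLat A ×ˢ interLat B).filter
              (fun p => X ≤ p.1 ∧ Y ≤ p.2 ∧ (X, Y) ≠ p),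
            arrMoebius (prodArr A B) (p.1.prod p.2)
            = ∑ p ∈ (interLat A ×ˢ interLat B).filter
              (fun p => X ≤ p.1 ∧ Y ≤ p.2 ∧ (X, Y) ≠ p),
            arrMoebius A p.1 * arrMoebius B p.2 := by
          apply Finset.sum_congr rfl
          intro p hp
          obtain ⟨hpP, hle1, hle2, hne⟩ := Finset.mem_filter.mp hp
          obtain ⟨hp1, hp2⟩ := Finset.mem_product.mp hpP
          apply ih p.1 hp1 p.2 hp2
          have hsub : ((interLat A ×ˢ interLat B).filter
                fun q => p.1 ≤ q.1 ∧ p.2 ≤ q.2 ∧ (p.1, p.2) ≠ q)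
              ⊆ ((interLat A ×ˢ interLat B).filter
                fun q => X ≤ q.1 ∧ Y ≤ q.2 ∧ (X, Y) ≠ q).erase p := by
            intro q hq
            obtain ⟨hqP, l1, l2, hne'⟩ := Finset.mem_filter.mp hq
            refine Finset.mem_erase.mpr ⟨fun h => hne' (by rw [h]),
              Finset.mem_filter.mpr ⟨hqP, hle1.trans l1, hle2.trans l2, ?_⟩⟩
            intro h
            apply hne
            rw [← h] at l1 l2
            have h1 : p.1 = X := le_antisymm l1 hle1
            have h2 : p.2 = Y := le_antisymm l2 hle2
            exact Prod.ext h1.symm h2.symm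
          have h1 := Finset.card_le_card hsub
          have h2 := Finset.card_erase_of_mem hp
          omega
        rw [hstep]
        have hnotmem : (X, Y) ∉ (interLat A ×ˢ interLat B).filter
            (fun p => X ≤ p.1 ∧ Y ≤ p.2 ∧ (X, Y) ≠ p) := by
          simp [Finset.mem_filter]
        have hins : (interLat A ×ˢ interLat B).filter (fun p => X ≤ p.1 ∧ Y ≤ p.2)
            = insert (X, Y) ((interLat A ×ˢ interLat B).filter
              (fun p => X ≤ p.1 ∧ Y ≤ p.2 ∧ (X, Y) ≠ p)) := by
          ext q
          simp only [Finset.mem_filter, Finset.mem_insert]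
          constructor
          · rintro ⟨hq, l1, l2⟩
            by_cases h : (X, Y) = q
            · exact Or.inl h.symm
            · exact Or.inr ⟨hq, l1, l2, h⟩
          · rintro (h | ⟨hq, l1, l2, _⟩)
            · subst h; exact ⟨Finset.mem_product.mpr ⟨hX, hY⟩, le_rfl, le_rfl⟩
            · exact ⟨hq, l1, l2⟩
        have hzero : ∑ p ∈ (interLat A ×ˢ interLat B).filter
              (fun p => X ≤ p.1 ∧ Y ≤ p.2),
            arrMoebius A p.1 * arrMoebius B p.2 = 0 := by
          rw [Finset.filter_product, Finset.sum_product, ← Finset.sum_mul_sum,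
            sum_arrMoebius A hX, sum_arrMoebius B hY]
          rcases not_and_or.mp hT with h | h
          · rw [if_neg h, zero_mul]
          · rw [if_neg h, mul_zero]
        rw [hins, Finset.sum_insert hnotmem] at hzero
        linarith
  intro X hX Y hY
  exact key _ X hX Y hY le_rfl

lemma charPolyAt_prodArr (A : Finset (Submodule K V)) (B : Finset (Submodule K W)) (t : ℤ) :
    charPolyAt (prodArr A B) t = charPolyAt A t * charPolyAt B t := by
  rw [charPolyAt, interLat_prodArr, Finset.sum_image (fun p _ q _ h => prod_inj h),
    Finset.sum_product, charPolyAt, charPolyAt, Finset.sum_mul_sum]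
  apply Finset.sum_congr rfl
  intro X hX
  apply Finset.sum_congr rfl
  intro Y hY
  dsimp only
  rw [arrMoebius_prodArr A B X hX Y hY, finrank_prod_sub, pow_add]
  ring

end CS

namespace CS

variable {K : Type*} [Field K] {V : Type*} [AddCommGroup V] [Module K V]
  {W : Type*} [AddCommGroup W] [Module K W]

lemma inf_image_map (e : V ≃ₗ[K] W) (S : Finset (Submodule K V)) :
    (S.image fun H => H.map (e : V →ₗ[K] W)).inf id = (S.inf id).map (e : V →ₗ[K] W) := by
  rw [Finset.inf_image]
  induction S using Finset.induction with
  | empty => simp [Submodule.map_top, LinearEquiv.range]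
  | insert _ _ h ih =>
    rw [Finset.inf_insert, Finset.inf_insert, ih]
    ext w
    simp [Submodule.mem_map_equiv, Submodule.mem_inf]

lemma charPolyAt_image_equiv [FiniteDimensional K V] [FiniteDimensional K W]
    (e : V ≃ₗ[K] W) (A : Finset (Submodule K V)) (t : ℤ) :
    charPolyAt (A.image fun H => H.map (e : V →ₗ[K] W)) t = charPolyAt A t := by
  apply charPolyAt_congr A _ (fun X => X.map (e : V →ₗ[K] W))
  · intro X hX
    obtain ⟨S, hS, rfl⟩ := mem_interLat_iff.mp hX
    exact mem_interLat_iff.mpr ⟨S.image fun H => H.map (e : V →ₗ[K] W),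
      Finset.image_subset_image hS, inf_image_map e S⟩
  · intro Z hZ
    obtain ⟨S, hS, rfl⟩ := mem_interLat_iff.mp hZ
    have hSeq : S = (A.filter fun H => H.map (e : V →ₗ[K] W) ∈ S).image
        fun H => H.map (e : V →ₗ[K] W) := by
      ext z
      simp only [Finset.mem_image, Finset.mem_filter]
      constructor
      · intro hz
        obtain ⟨H, hH, rfl⟩ := Finset.mem_image.mp (hS hz)
        exact ⟨H, ⟨hH, hz⟩, rfl⟩
      · rintro ⟨H, ⟨_, hz⟩, rfl⟩
        exact hz
    refine ⟨(A.filter fun H => H.map (e : V →ₗ[K] W) ∈ S).inf id,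
      mem_interLat_iff.mpr ⟨_, Finset.filter_subset _ _, rfl⟩, ?_⟩
    rw [← inf_image_map, ← hSeq]
  · intro X _ Y _
    exact (Submodule.map_le_map_iff_of_injective e.injective X Y).symm
  · intro X _
    exact LinearEquiv.finrank_map_eq e X

/-- The equivalence `↥(H₁ × ⊤) ≃ ↥H₁ × W`. -/
def resEquivL (H₁ : Submodule K V) : ↥(H₁.prod (⊤ : Submodule K W)) ≃ₗ[K] ↥H₁ × W where
  toFun z := (⟨(z : V × W).1, (Submodule.mem_prod.mp z.2).1⟩, (z : V × W).2)
  invFun p := ⟨((p.1 : V), p.2), Submodule.mem_prod.mpr ⟨p.1.2, trivial⟩⟩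
  map_add' _ _ := rfl
  map_smul' _ _ := rfl
  left_inv _ := rfl
  right_inv _ := rfl

def resEquivR (H₂ : Submodule K W) : ↥((⊤ : Submodule K V).prod H₂) ≃ₗ[K] V × ↥H₂ where
  toFun z := ((z : V × W).1, ⟨(z : V × W).2, (Submodule.mem_prod.mp z.2).2⟩)
  invFun p := ⟨(p.1, (p.2 : W)), Submodule.mem_prod.mpr ⟨trivial, p.2.2⟩⟩
  map_add' _ _ := rfl
  map_smul' _ _ := rfl
  left_inv _ := rfl
  right_inv _ := rfl

lemma map_resEquivL (H₁ : Submodule K V) (Y : Submodule K (V × W)) :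
    (Y.comap (H₁.prod (⊤ : Submodule K W)).subtype).map
      (resEquivL (W := W) H₁ : ↥(H₁.prod ⊤) →ₗ[K] ↥H₁ × W)
    = Y.comap ((H₁.subtype).prodMap (LinearMap.id : W →ₗ[K] W)) := by
  ext z
  simp only [Submodule.mem_map, Submodule.mem_comap, Submodule.subtype_apply,
    LinearMap.prodMap_apply, LinearMap.id_coe, id_eq]
  constructor
  · rintro ⟨x, hx, rfl⟩
    convert hx using 1
    rfl
  · intro hz
    exact ⟨⟨((z.1 : V), z.2), Submodule.mem_prod.mpr ⟨z.1.2, trivial⟩⟩, hz, rfl⟩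

lemma map_resEquivR (H₂ : Submodule K W) (Y : Submodule K (V × W)) :
    (Y.comap ((⊤ : Submodule K V).prod H₂).subtype).map
      (resEquivR (V := V) H₂ : ↥((⊤ : Submodule K V).prod H₂) →ₗ[K] V × ↥H₂)
    = Y.comap ((LinearMap.id : V →ₗ[K] V).prodMap (H₂.subtype)) := by
  ext z
  simp only [Submodule.mem_map, Submodule.mem_comap, Submodule.subtype_apply,
    LinearMap.prodMap_apply, LinearMap.id_coe, id_eq]
  constructor
  · rintro ⟨x, hx, rfl⟩
    convert hx using 1
    rfl
  · intro hz
    exact ⟨⟨(z.1, (z.2 : W)), Submodule.mem_prod.mpr ⟨trivial, z.2.2⟩⟩, hz, rfl⟩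

end CS

namespace CS

variable {K : Type*} [Field K] {V : Type*} [AddCommGroup V] [Module K V]
  {W : Type*} [AddCommGroup W] [Module K W]

lemma resArr_prodArr_left (A : Finset (Submodule K V)) (B : Finset (Submodule K W))
    (hB : ∀ H ∈ B, H ≠ ⊤) (H₁ : Submodule K V) :
    (resArr (prodArr A B) (H₁.prod ⊤)).image
      (fun Z => Z.map (resEquivL (W := W) H₁ : ↥(H₁.prod ⊤) →ₗ[K] ↥H₁ × W))
    = prodArr (resArr A H₁) B := by
  rw [resArr, Finset.image_image]
  rw [prodArr, Finset.filter_union, Finset.filter_image, Finset.filter_image]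
  have h1 : (A.filter fun H => ¬ H₁.prod (⊤ : Submodule K W) ≤ H.prod ⊤)
      = A.filter fun H => ¬ H₁ ≤ H := by
    apply Finset.filter_congr
    intro H _
    simp [prod_le_prod_iff]
  have h2 : (B.filter fun H =>
      ¬ H₁.prod (⊤ : Submodule K W) ≤ (⊤ : Submodule K V).prod H) = B := by
    apply Finset.filter_true_of_mem
    intro H hH hle
    exact hB H hH (top_le_iff.mp (prod_le_prod_iff.mp hle).2)
  rw [h1, h2, Finset.image_union, Finset.image_image, Finset.image_image]
  rw [prodArr, resArr, Finset.image_image]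
  congr 1
  · apply Finset.image_congr
    intro H _
    simp only [Function.comp_apply]
    rw [map_resEquivL, LinearMap.prodMap_comap_prod]
    simp
  · apply Finset.image_congr
    intro H _
    simp only [Function.comp_apply]
    rw [map_resEquivL, LinearMap.prodMap_comap_prod]
    simp
lemma resArr_prodArr_right (A : Finset (Submodule K V)) (B : Finset (Submodule K W))
    (hA : ∀ H ∈ A, H ≠ ⊤) (H₂ : Submodule K W) :
    (resArr (prodArr A B) ((⊤ : Submodule K V).prod H₂)).image
      (fun Z => Z.map (resEquivR (V := V) H₂ : ↥((⊤ : Submodule K V).prod H₂) →ₗ[K] V × ↥H₂))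
    = prodArr A (resArr B H₂) := by
  rw [resArr, Finset.image_image]
  rw [prodArr, Finset.filter_union, Finset.filter_image, Finset.filter_image]
  have h1 : (A.filter fun H =>
      ¬ (⊤ : Submodule K V).prod H₂ ≤ H.prod (⊤ : Submodule K W)) = A := by
    apply Finset.filter_true_of_mem
    intro H hH hle
    exact hA H hH (top_le_iff.mp (prod_le_prod_iff.mp hle).1)
  have h2 : (B.filter fun H => ¬ (⊤ : Submodule K V).prod H₂ ≤ (⊤ : Submodule K V).prod H)
      = B.filter fun H => ¬ H₂ ≤ H := by
    apply Finset.filter_congr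
    intro H _
    simp [prod_le_prod_iff]
  rw [h1, h2, Finset.image_union, Finset.image_image, Finset.image_image]
  rw [prodArr, resArr, Finset.image_image]
  congr 1
  · apply Finset.image_congr
    intro H _
    simp only [Function.comp_apply]
    rw [map_resEquivR, LinearMap.prodMap_comap_prod]
    simp
  · apply Finset.image_congr
    intro H _
    simp only [Function.comp_apply]
    rw [map_resEquivR, LinearMap.prodMap_comap_prod]
    simp
end CS

end

/-- The product of two combinatorially simplicial arrangements (over any field)
is combinatorially simplicial. -/
theorem comb_simplicial_product {K : Type*} [Field K] (l1 l2 : ℕ)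
    (A₁ : Finset (Submodule K (Fin l1 → K))) (A₂ : Finset (Submodule K (Fin l2 → K)))
    (h₁ : ∀ H ∈ A₁, IsLinHyperplane H) (h₂ : ∀ H ∈ A₂, IsLinHyperplane H)
    (hs₁ : sInvariant A₁ = 0) (hs₂ : sInvariant A₂ = 0) :
    sInvariant (prodArr A₁ A₂) = 0 := by
  classical
  have hne₁ : ∀ H ∈ A₁, H ≠ ⊤ := by
    intro H hH
    obtain ⟨f, hf, rfl⟩ := h₁ H hH
    simpa [LinearMap.ker_eq_top] using hf
  have hne₂ : ∀ H ∈ A₂, H ≠ ⊤ := by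
    intro H hH
    obtain ⟨f, hf, rfl⟩ := h₂ H hH
    simpa [LinearMap.ker_eq_top] using hf
  have hr1 : Module.finrank K (Fin l1 → K) = l1 := by simp [Module.finrank_pi]
  have hr2 : Module.finrank K (Fin l2 → K) = l2 := by simp [Module.finrank_pi]
  have hrp : Module.finrank K ((Fin l1 → K) × (Fin l2 → K)) = l1 + l2 := by
    rw [Module.finrank_prod, hr1, hr2]
  have hχ : charPolyAt (prodArr A₁ A₂) (-1) = charPolyAt A₁ (-1) * charPolyAt A₂ (-1) :=
    CS.charPolyAt_prodArr _ _ _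
  have hdisj : Disjoint (A₁.image fun H => H.prod (⊤ : Submodule K (Fin l2 → K)))
      (A₂.image fun H => (⊤ : Submodule K (Fin l1 → K)).prod H) := by
    rw [Finset.disjoint_left]
    rintro Z h1 h2
    obtain ⟨H, hH, rfl⟩ := Finset.mem_image.mp h1
    obtain ⟨H', _, hEq⟩ := Finset.mem_image.mp h2
    exact hne₁ H hH (CS.prod_eq_prod_iff.mp hEq).1.symm
  have hsum : ∑ H ∈ prodArr A₁ A₂, |charPolyAt (resArr (prodArr A₁ A₂) H) (-1)|
      = (∑ H ∈ A₁, |charPolyAt (resArr A₁ H) (-1)|) * |charPolyAt A₂ (-1)|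
        + |charPolyAt A₁ (-1)| * (∑ H ∈ A₂, |charPolyAt (resArr A₂ H) (-1)|) := by
    rw [prodArr, Finset.sum_union hdisj,
      Finset.sum_image (fun H _ H' _ h => ((CS.prod_eq_prod_iff.mp h).1 : H = H')),
      Finset.sum_image (fun H _ H' _ h => ((CS.prod_eq_prod_iff.mp h).2 : H = H')),
      Finset.sum_mul, Finset.mul_sum]
    congr 1
    · apply Finset.sum_congr rfl
      intro H hH
      have h3 := CS.charPolyAt_image_equiv (CS.resEquivL (W := Fin l2 → K) H)
        (resArr (prodArr A₁ A₂) (H.prod ⊤)) (-1)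
      rw [CS.resArr_prodArr_left A₁ A₂ hne₂ H] at h3
      show |charPolyAt (resArr (prodArr A₁ A₂) (H.prod ⊤)) (-1)| = _
      rw [← h3, CS.charPolyAt_prodArr, abs_mul]
    · apply Finset.sum_congr rfl
      intro H hH
      have h3 := CS.charPolyAt_image_equiv (CS.resEquivR (V := Fin l1 → K) H)
        (resArr (prodArr A₁ A₂) ((⊤ : Submodule K (Fin l1 → K)).prod H)) (-1)
      rw [CS.resArr_prodArr_right A₁ A₂ hne₁ H] at h3
      show |charPolyAt (resArr (prodArr A₁ A₂) ((⊤ : Submodule K (Fin l1 → K)).prod H)) (-1)| = _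
      rw [← h3, CS.charPolyAt_prodArr, abs_mul]
  rw [sInvariant] at hs₁ hs₂ ⊢
  rw [hr1] at hs₁
  rw [hr2] at hs₂
  rw [hχ, hrp, hsum, abs_mul]
  push_cast
  linear_combination |charPolyAt A₂ (-1)| * hs₁ + |charPolyAt A₁ (-1)| * hs₂
end

section
/- Let A be a simplicial ℓ-arrangement in ℝ^ℓ, K a chamber with basis B^K = {α_1,…,α_ℓ}, and 1 ≤ i ≤ ℓ. Then there exist real numbers c^K_{ij} (1 ≤ j ≤ ℓ) such that {α_j − c^K_{ij}α_i : j = 1,…,ℓ} is a basis for the adjacent chamber K_i. Moreover, for j ≠ i one has c^K_{ij} ≤ 0 and c^K_{ij} is uniquely determined by B^K, while for j = i one has c^K_{ii} > 1. -/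
open scoped Classical

namespace ArrAux

variable {ℓ : ℕ}

/-- the complement of the arrangement -/
def arrU (A : Finset (Submodule ℝ (Fin ℓ → ℝ))) : Set (Fin ℓ → ℝ) :=
  (⋃ H ∈ A, (H : Set (Fin ℓ → ℝ)))ᶜ

lemma arrU_isOpen (A : Finset (Submodule ℝ (Fin ℓ → ℝ))) : IsOpen (arrU A) := by
  rw [arrU, isOpen_compl_iff]
  exact Set.Finite.isClosed_biUnion A.finite_toSet
    (fun H _ => H.closed_of_finiteDimensional)

lemma arrU_disjoint {A : Finset (Submodule ℝ (Fin ℓ → ℝ))} {H : Submodule ℝ (Fin ℓ → ℝ)}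
    (hH : H ∈ A) {x : Fin ℓ → ℝ} (hx : x ∈ arrU A) : x ∉ H := by
  intro hxH
  exact hx (Set.mem_biUnion hH hxH)

lemma chamber_subset_arrU {A : Finset (Submodule ℝ (Fin ℓ → ℝ))} {C : Set (Fin ℓ → ℝ)}
    (hC : IsChamberOf A C) : C ⊆ arrU A := by
  obtain ⟨x, hx, rfl⟩ := hC
  exact connectedComponentIn_subset _ _

lemma chamber_preconnected {A : Finset (Submodule ℝ (Fin ℓ → ℝ))} {C : Set (Fin ℓ → ℝ)}
    (hC : IsChamberOf A C) : IsPreconnected C := by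
  obtain ⟨x, hx, rfl⟩ := hC
  exact isPreconnected_connectedComponentIn

lemma chamber_eq_componentIn {A : Finset (Submodule ℝ (Fin ℓ → ℝ))} {C : Set (Fin ℓ → ℝ)}
    (hC : IsChamberOf A C) {y : Fin ℓ → ℝ} (hy : y ∈ C) :
    connectedComponentIn (arrU A) y = C := by
  obtain ⟨x, hx, rfl⟩ := hC
  exact (connectedComponentIn_eq hy).symm

lemma preconnected_subset_chamber {A : Finset (Submodule ℝ (Fin ℓ → ℝ))}
    {C s : Set (Fin ℓ → ℝ)} (hC : IsChamberOf A C) (hs : IsPreconnected s)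
    (hsU : s ⊆ arrU A) {y : Fin ℓ → ℝ} (hy : y ∈ s) (hyC : y ∈ C) : s ⊆ C := by
  rw [← chamber_eq_componentIn hC hyC]
  exact hs.subset_connectedComponentIn hy hsU

/-- expansion in a dual pair -/
lemma eq_sum_dual {e : Module.Basis (Fin ℓ) ℝ (Fin ℓ → ℝ)} {α : Fin ℓ → ((Fin ℓ → ℝ) →ₗ[ℝ] ℝ)}
    (hdual : ∀ j k, α j (e k) = if j = k then 1 else 0) (x : Fin ℓ → ℝ) :
    x = ∑ k, α k x • e k := by
  have hrepr : ∀ j, α j x = e.repr x j := by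
    intro j
    conv_lhs => rw [← e.sum_repr x]
    rw [map_sum]
    rw [Finset.sum_congr rfl (fun k _ => by rw [map_smul, hdual j k, smul_eq_mul])]
    simp [mul_ite, mul_one, mul_zero, Finset.sum_ite_eq]
  conv_lhs => rw [← e.sum_repr x]
  exact Finset.sum_congr rfl (fun k _ => by rw [hrepr k])

lemma finrank_ker_functional {f : (Fin ℓ → ℝ) →ₗ[ℝ] ℝ} (hf : f ≠ 0) :
    Module.finrank ℝ ↥(LinearMap.ker f) + 1 = ℓ := by
  have h := LinearMap.finrank_range_add_finrank_ker f
  rw [Module.finrank_fin_fun] at h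
  have hr : LinearMap.range f = ⊤ := by
    obtain ⟨x, hx⟩ : ∃ x, f x ≠ 0 := by
      by_contra hcon
      push_neg at hcon
      exact hf (LinearMap.ext hcon)
    rw [LinearMap.range_eq_top]
    intro y
    exact ⟨(y / f x) • x, by rw [map_smul, smul_eq_mul, div_mul_cancel₀ _ hx]⟩
  rw [hr, finrank_top, Module.finrank_self] at h
  omega

lemma nonzero_of_dual {e : Module.Basis (Fin ℓ) ℝ (Fin ℓ → ℝ)} {α : Fin ℓ → ((Fin ℓ → ℝ) →ₗ[ℝ] ℝ)}
    (hdual : ∀ j k, α j (e k) = if j = k then 1 else 0) (j : Fin ℓ) : α j ≠ 0 := by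
  intro hcon
  have := hdual j j
  rw [hcon] at this
  simp at this

/-- closure of the open cone -/
lemma cone_closure {α : Fin ℓ → ((Fin ℓ → ℝ) →ₗ[ℝ] ℝ)} {p : Fin ℓ → ℝ}
    (hp : ∀ j, α j p = 1) :
    closure {x | ∀ j, 0 < α j x} = {x | ∀ j, 0 ≤ α j x} := by
  apply Set.Subset.antisymm
  · apply closure_minimal
    · intro x hx j; exact le_of_lt (hx j)
    · have hset : {x : Fin ℓ → ℝ | ∀ j, 0 ≤ α j x} = ⋂ j, {x | 0 ≤ α j x} := by
        ext x; simp [Set.mem_iInter]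
      rw [hset]
      exact isClosed_iInter (fun j => isClosed_le continuous_const
        (α j).continuous_of_finiteDimensional)
  · intro x hx
    have htend : Filter.Tendsto (fun n : ℕ => x + (1 / ((n : ℝ) + 1)) • p)
        Filter.atTop (nhds x) := by
      have h0 : Filter.Tendsto (fun n : ℕ => (1 / ((n : ℝ) + 1))) Filter.atTop (nhds 0) :=
        tendsto_one_div_add_atTop_nhds_zero_nat
      have := (h0.smul_const p).const_add x
      simpa using this
    refine mem_closure_of_tendsto htend (Filter.Eventually.of_forall ?_)
    intro n j
    rw [map_add, map_smul, hp j, smul_eq_mul, mul_one]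
    have : (0:ℝ) < 1 / ((n:ℝ) + 1) := by positivity
    linarith [hx j]



lemma mono_matrix {ι κ : Type*} [Fintype ι] [Fintype κ]
    (M : ι → κ → ℝ) (h1 : ∀ m j, 0 ≤ M m j)
    (h2 : ∀ c : κ → ℝ, (∀ j, 0 < c j) ↔ (∀ m, 0 < ∑ j, M m j * c j))
    (hcard : Fintype.card ι = Fintype.card κ) :
    ∃ ρ : κ → ι, Function.Bijective ρ ∧
      ∀ j, 0 < M (ρ j) j ∧ ∀ j', j' ≠ j → M (ρ j) j' = 0 := by
  classical
  have hrow : ∀ m, 0 < ∑ j, M m j := by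
    intro m
    have := (h2 (fun _ => 1)).1 (fun _ => one_pos) m
    simpa using this
  have key : ∀ j₀ : κ, ∃ m, 0 < M m j₀ ∧ ∀ j ≠ j₀, M m j = 0 := by
    intro j₀
    by_contra hcon
    push_neg at hcon
    -- every row has positive mass off column j₀ (relative to its j₀ entry)
    have hs : ∀ m, 0 < ∑ j ∈ Finset.univ.erase j₀, M m j := by
      intro m
      rcases eq_or_lt_of_le (h1 m j₀) with h0 | hpos
      · have : ∑ j ∈ Finset.univ.erase j₀, M m j = ∑ j, M m j := by
          rw [← Finset.sum_erase_add Finset.univ _ (Finset.mem_univ j₀), ← h0, add_zero]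
        rw [this]; exact hrow m
      · obtain ⟨j, hj, hMj⟩ := hcon m hpos
        have hjmem : j ∈ Finset.univ.erase j₀ := Finset.mem_erase.2 ⟨hj, Finset.mem_univ j⟩
        have : 0 < M m j := lt_of_le_of_ne (h1 m j) (Ne.symm hMj)
        exact Finset.sum_pos' (fun k _ => h1 m k) ⟨j, hjmem, this⟩
    -- ι is nonempty (κ is nonempty since j₀ exists)
    have hιne : Nonempty ι := by
      rw [← Fintype.card_pos_iff, hcard, Fintype.card_pos_iff]
      exact ⟨j₀⟩
    obtain ⟨ε, hε, hεle⟩ :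
        ∃ ε : ℝ, 0 < ε ∧ ∀ m, ε * M m j₀ ≤ (∑ j ∈ Finset.univ.erase j₀, M m j) / 2 := by
      refine ⟨Finset.univ.inf' (Finset.univ_nonempty) (fun m =>
        (∑ j ∈ Finset.univ.erase j₀, M m j) / (2 * (M m j₀ + 1))), ?_, ?_⟩
      · rw [Finset.lt_inf'_iff]
        intro m _
        have : 0 < 2 * (M m j₀ + 1) := by nlinarith [h1 m j₀]
        exact div_pos (hs m) this
      · intro m
        have hle : Finset.univ.inf' (Finset.univ_nonempty) (fun m =>
            (∑ j ∈ Finset.univ.erase j₀, M m j) / (2 * (M m j₀ + 1))) ≤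
            (∑ j ∈ Finset.univ.erase j₀, M m j) / (2 * (M m j₀ + 1)) :=
          Finset.inf'_le _ (Finset.mem_univ m)
        have h2' : 0 < 2 * (M m j₀ + 1) := by nlinarith [h1 m j₀]
        have := mul_le_mul_of_nonneg_right hle (h1 m j₀)
        calc Finset.univ.inf' (Finset.univ_nonempty) (fun m =>
            (∑ j ∈ Finset.univ.erase j₀, M m j) / (2 * (M m j₀ + 1))) * M m j₀
            ≤ (∑ j ∈ Finset.univ.erase j₀, M m j) / (2 * (M m j₀ + 1)) * M m j₀ := this
          _ ≤ (∑ j ∈ Finset.univ.erase j₀, M m j) / 2 := by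
              rw [div_mul_eq_mul_div, div_le_div_iff₀ h2' two_pos]
              have h0 : 0 ≤ M m j₀ := h1 m j₀
              have hsm : 0 < ∑ j ∈ Finset.univ.erase j₀, M m j := hs m
              nlinarith
    set c : κ → ℝ := fun j => if j = j₀ then -ε else 1 with hc
    have hpos : ∀ m, 0 < ∑ j, M m j * c j := by
      intro m
      have hsplit : ∑ j, M m j * c j
          = (∑ j ∈ Finset.univ.erase j₀, M m j * c j) + M m j₀ * c j₀ :=
        (Finset.sum_erase_add _ _ (Finset.mem_univ j₀)).symm
      have h1' : ∑ j ∈ Finset.univ.erase j₀, M m j * c j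
          = ∑ j ∈ Finset.univ.erase j₀, M m j := by
        apply Finset.sum_congr rfl
        intro j hj
        have : j ≠ j₀ := (Finset.mem_erase.1 hj).1
        simp [hc, this]
      have h2' : M m j₀ * c j₀ = -(ε * M m j₀) := by simp [hc]; ring
      rw [hsplit, h1', h2']
      have := hεle m
      have := hs m
      linarith
    have := (h2 c).2 hpos j₀
    simp [hc] at this
    linarith
  choose ρ hρpos hρzero using key
  have hinj : Function.Injective ρ := by
    intro j₁ j₂ heq
    by_contra hne
    have h0 : M (ρ j₂) j₁ = 0 := hρzero j₂ j₁ hne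
    rw [← heq] at h0
    exact absurd h0 (ne_of_gt (hρpos j₁))
  refine ⟨ρ, ?_, fun j => ⟨hρpos j, hρzero j⟩⟩
  rw [Fintype.bijective_iff_injective_and_card]
  exact ⟨hinj, hcard.symm⟩


lemma exists_dual_basis_of_cone {ℓ : ℕ} (b : Module.Basis (Fin ℓ) ℝ (Fin ℓ → ℝ))
    (α : Fin ℓ → ((Fin ℓ → ℝ) →ₗ[ℝ] ℝ))
    (h : ∀ x, (∀ m, 0 < b.repr x m) ↔ (∀ j, 0 < α j x)) :
    ∃ e : Module.Basis (Fin ℓ) ℝ (Fin ℓ → ℝ), ∀ j k, α j (e k) = if j = k then 1 else 0 := by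
  classical
  set M : Fin ℓ → Fin ℓ → ℝ := fun j m => α j (b m) with hM
  have hval : ∀ (c : Fin ℓ → ℝ) (j), α j (∑ m, c m • b m) = ∑ m, M j m * c m := by
    intro c j
    rw [map_sum]
    apply Finset.sum_congr rfl
    intro m _
    rw [map_smul, smul_eq_mul, mul_comm]
  have h2 : ∀ c : Fin ℓ → ℝ, (∀ m, 0 < c m) ↔ (∀ j, 0 < ∑ m, M j m * c m) := by
    intro c
    have := h (∑ m, c m • b m)
    rw [Module.Basis.repr_sum_self] at this
    constructor
    · intro hc j; rw [← hval]; exact this.1 hc j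
    · intro hc m; exact (this.2 (fun j => by rw [hval]; exact hc j)) m
  have hS : ∀ j, 0 < ∑ m, M j m := by
    intro j
    have := (h2 (fun _ => 1)).1 (fun _ => one_pos) j
    simpa using this
  have h1 : ∀ j m, 0 ≤ M j m := by
    intro j m
    by_contra hneg
    push_neg at hneg
    -- consider c = δ_m + ε
    set ε : ℝ := -M j m / (2 * ∑ m', M j m') with hε
    have hεpos : 0 < ε := div_pos (by linarith) (by linarith [hS j])
    have hc : ∀ m', (0:ℝ) < (if m' = m then 1 else 0) + ε := by
      intro m'; split <;> linarith
    have := (h2 (fun m' => (if m' = m then 1 else 0) + ε)).1 hc j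
    have hsum : ∑ m', M j m' * ((if m' = m then 1 else 0) + ε)
        = M j m + ε * ∑ m', M j m' := by
      rw [Finset.sum_congr rfl (fun m' _ => mul_add (M j m') _ _), Finset.sum_add_distrib]
      congr 1
      · simp [Finset.mul_sum, mul_ite]
      · rw [← Finset.sum_mul, mul_comm]
    have hSj := hS j
    have hSne : (∑ m', M j m') ≠ 0 := ne_of_gt hSj
    have heq : ε * ∑ m', M j m' = -M j m / 2 := by
      rw [hε]; field_simp
    rw [hsum, heq] at this
    linarith
  obtain ⟨ρ, hbij, hρ⟩ := mono_matrix M h1 h2 rfl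
  set ρe : Fin ℓ ≃ Fin ℓ := Equiv.ofBijective ρ hbij with hρe
  have hne : ∀ j, (M j (ρe.symm j)) ≠ 0 := by
    intro j
    have h0 : 0 < M (ρ (ρe.symm j)) (ρe.symm j) := (hρ (ρe.symm j)).1
    have : ρ (ρe.symm j) = j := Equiv.ofBijective_apply_symm_apply ρ hbij j
    rw [this] at h0
    exact ne_of_gt h0
  set u : Fin ℓ → ℝˣ := fun j => (Units.mk0 (M j (ρe.symm j)) (hne j))⁻¹ with hu
  refine ⟨(b.reindex ρe).unitsSMul u, ?_⟩
  intro j k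
  have hj : ρ (ρe.symm j) = j := ρe.apply_symm_apply j
  have happ : ((b.reindex ρe).unitsSMul u) k = ((u k : ℝ)) • b (ρe.symm k) := by
    rw [Module.Basis.unitsSMul_apply, Module.Basis.reindex_apply, Units.smul_def]
  rw [happ, map_smul, smul_eq_mul]
  by_cases hjk : j = k
  · subst hjk
    rw [if_pos rfl]
    have hval' : (α j) (b (ρe.symm j)) = M j (ρe.symm j) := rfl
    rw [hval', hu]
    simp only [Units.val_inv_eq_inv_val, Units.val_mk0]
    exact inv_mul_cancel₀ (hne j)
  · rw [if_neg hjk]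
    have hsymm_ne : ρe.symm k ≠ ρe.symm j := fun hcon => hjk (by
      have hk : ρ (ρe.symm k) = k := ρe.apply_symm_apply k
      rw [← hj, ← hcon, hk])
    have h0 : M (ρ (ρe.symm j)) (ρe.symm k) = 0 := (hρ (ρe.symm j)).2 _ hsymm_ne
    rw [hj] at h0
    have hval' : (α j) (b (ρe.symm k)) = M j (ρe.symm k) := rfl
    rw [hval', h0, mul_zero]

lemma avoid_submodules {W : Type*} [AddCommGroup W] [Module ℝ W]
    (T : Finset (Submodule ℝ W)) (h' : Submodule ℝ W)
    (hT : ∀ H ∈ T, ¬ h' ≤ H) : ∃ v ∈ h', ∀ H ∈ T, v ∉ H := by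
  classical
  induction T using Finset.induction_on with
  | empty => exact ⟨0, h'.zero_mem, by simp⟩
  | insert _ _ hH₀ ih =>
    rename_i H₀ T'
    obtain ⟨v, hv, hvT⟩ := ih (fun H hH => hT H (Finset.mem_insert_of_mem hH))
    obtain ⟨u, hu, huH₀⟩ := SetLike.not_le_iff_exists.1 (hT H₀ (Finset.mem_insert_self _ _))
    by_cases hvH₀ : v ∉ H₀
    · exact ⟨v, hv, fun H hH => (Finset.mem_insert.1 hH).elim (fun h => h ▸ hvH₀)
        (fun h => hvT H h)⟩
    push_neg at hvH₀
    have hfin : (Set.iUnion (fun H : T' => {t : ℝ | v + t • u ∈ (H : Submodule ℝ W)})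
        ∪ {0}).Finite := by
      apply Set.Finite.union _ (Set.finite_singleton 0)
      apply Set.finite_iUnion
      intro H
      apply Set.Subsingleton.finite
      intro t₁ h₁ t₂ h₂
      by_contra hne
      have hd : (t₁ - t₂) • u ∈ (H : Submodule ℝ W) := by
        have := Submodule.sub_mem _ h₁ h₂
        simpa [sub_smul] using this
      have hu' : u ∈ (H : Submodule ℝ W) := by
        have := Submodule.smul_mem _ (t₁ - t₂)⁻¹ hd
        rwa [smul_smul, inv_mul_cancel₀ (sub_ne_zero.2 hne), one_smul] at this
      have hv' : v ∈ (H : Submodule ℝ W) := by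
        have := Submodule.sub_mem _ h₁ (Submodule.smul_mem _ t₁ hu')
        simpa using this
      exact hvT H H.2 hv'
    obtain ⟨t, ht⟩ := (Set.Finite.infinite_compl hfin).nonempty
    rw [Set.mem_compl_iff, Set.mem_union] at ht
    push_neg at ht
    obtain ⟨htU, ht0⟩ := ht
    have ht0' : t ≠ 0 := by simpa using ht0
    refine ⟨v + t • u, h'.add_mem hv (h'.smul_mem t hu), ?_⟩
    intro H hH
    rcases Finset.mem_insert.1 hH with rfl | hH'
    · intro hmem
      have : t • u ∈ H := by
        have := Submodule.sub_mem _ hmem hvH₀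
        simpa using this
      have : u ∈ H := by
        have h2 := Submodule.smul_mem _ t⁻¹ this
        rwa [smul_smul, inv_mul_cancel₀ ht0', one_smul] at h2
      exact huH₀ this
    · intro hmem
      apply htU
      exact Set.mem_iUnion.2 ⟨⟨H, hH'⟩, hmem⟩

lemma facet_covered {A : Finset (Submodule ℝ (Fin ℓ → ℝ))} {D : Set (Fin ℓ → ℝ)}
    (hD : IsChamberOf A D)
    {β : Fin ℓ → ((Fin ℓ → ℝ) →ₗ[ℝ] ℝ)} {e' : Module.Basis (Fin ℓ) ℝ (Fin ℓ → ℝ)}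
    (hdual : ∀ j k, β j (e' k) = if j = k then 1 else 0)
    (hDeq : D = {x | ∀ m, 0 < β m x}) (m : Fin ℓ)
    {x : Fin ℓ → ℝ} (hx0 : β m x = 0) (hxpos : ∀ k, k ≠ m → 0 < β k x) :
    x ∉ arrU A := by
  intro hxU
  obtain ⟨r, hr, hball⟩ := Metric.isOpen_iff.1 (arrU_isOpen A) x hxU
  set ε := r / (2 * (‖e' m‖ + 1)) with hε
  have hn : (0:ℝ) ≤ ‖e' m‖ := norm_nonneg _
  have hεpos : 0 < ε := by rw [hε]; positivity
  have hmem : x + ε • e' m ∈ Metric.ball x r := by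
    rw [Metric.mem_ball, dist_eq_norm, add_sub_cancel_left, norm_smul,
      Real.norm_eq_abs, abs_of_pos hεpos, hε]
    rw [div_mul_eq_mul_div, div_lt_iff₀ (by positivity)]
    nlinarith
  have hmemD : x + ε • e' m ∈ D := by
    rw [hDeq]
    intro k
    by_cases hk : k = m
    · subst hk
      rw [map_add, map_smul, hdual k k, hx0, smul_eq_mul]
      simp [hεpos]
    · rw [map_add, map_smul, hdual k m, if_neg hk, smul_eq_mul, mul_zero, add_zero]
      exact hxpos k hk
  have hsub : Metric.ball x r ⊆ D := by
    refine preconnected_subset_chamber hD (convex_ball x r).isPreconnected hball hmem hmemD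
  have : x ∈ D := hsub (Metric.mem_ball_self hr)
  rw [hDeq] at this
  exact absurd (this m) (by rw [hx0]; exact lt_irrefl 0)

lemma facet_ker_mem {A : Finset (Submodule ℝ (Fin ℓ → ℝ))}
    (hhyp : ∀ H ∈ A, IsLinHyperplane H) {D : Set (Fin ℓ → ℝ)} (hD : IsChamberOf A D)
    {β : Fin ℓ → ((Fin ℓ → ℝ) →ₗ[ℝ] ℝ)} {e' : Module.Basis (Fin ℓ) ℝ (Fin ℓ → ℝ)}
    (hdual : ∀ j k, β j (e' k) = if j = k then 1 else 0)
    (hDeq : D = {x | ∀ m, 0 < β m x}) (m : Fin ℓ) :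
    LinearMap.ker (β m) ∈ A := by
  classical
  set z := ∑ k ∈ Finset.univ.erase m, e' k with hz
  have hzval : ∀ j, β j z = ∑ k ∈ Finset.univ.erase m, (if j = k then (1:ℝ) else 0) := by
    intro j
    rw [hz, map_sum]
    exact Finset.sum_congr rfl (fun k _ => hdual j k)
  have hzm : β m z = 0 := by
    rw [hzval]
    apply Finset.sum_eq_zero
    intro k hk
    rw [if_neg (Ne.symm (Finset.mem_erase.1 hk).1)]
  have hzk : ∀ k, k ≠ m → β k z = 1 := by
    intro k hk
    rw [hzval, Finset.sum_ite_eq (Finset.univ.erase m) k (fun _ => (1:ℝ)),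
      if_pos (Finset.mem_erase.2 ⟨hk, Finset.mem_univ k⟩)]
  have hstep : ∃ H ∈ A, LinearMap.ker (β m) ≤ H := by
    by_contra hcon
    push_neg at hcon
    obtain ⟨v, hv, hvH⟩ := avoid_submodules A (LinearMap.ker (β m))
      (fun H hH => (fun hle => (hcon H hH) hle))
    set t₀ : ℝ := 1 / (1 + ∑ k, |β k v|) with ht₀
    have hsum_nonneg : (0:ℝ) ≤ ∑ k, |β k v| := Finset.sum_nonneg (fun k _ => abs_nonneg _)
    have ht₀pos : 0 < t₀ := by rw [ht₀]; positivity
    have hbadfin : (Set.iUnion (fun H : A => {t : ℝ | z + t • v ∈ (H : Submodule ℝ (Fin ℓ → ℝ))})).Finite := by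
      apply Set.finite_iUnion
      intro H
      apply Set.Subsingleton.finite
      intro t₁ h₁ t₂ h₂
      by_contra hne
      have hd : (t₁ - t₂) • v ∈ (H : Submodule ℝ (Fin ℓ → ℝ)) := by
        have := Submodule.sub_mem _ h₁ h₂
        simpa [sub_smul] using this
      have hv' : v ∈ (H : Submodule ℝ (Fin ℓ → ℝ)) := by
        have h2 := Submodule.smul_mem _ (t₁ - t₂)⁻¹ hd
        rwa [smul_smul, inv_mul_cancel₀ (sub_ne_zero.2 hne), one_smul] at h2
      exact hvH H H.2 hv'
    have hIoo : (Set.Ioo (0:ℝ) t₀).Infinite := Set.Ioo_infinite ht₀pos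
    obtain ⟨t, htIoo, htbad⟩ := (hIoo.diff hbadfin).nonempty
    obtain ⟨ht1, ht2⟩ := htIoo
    have hx0 : β m (z + t • v) = 0 := by
      rw [map_add, map_smul, hzm, smul_eq_mul, LinearMap.mem_ker.1 hv, mul_zero, add_zero]
    have hxpos : ∀ k, k ≠ m → 0 < β k (z + t • v) := by
      intro k hk
      rw [map_add, map_smul, hzk k hk, smul_eq_mul]
      have habs : |β k v| ≤ ∑ k', |β k' v| :=
        Finset.single_le_sum (f := fun k' => |β k' v|) (fun k' _ => abs_nonneg _) (Finset.mem_univ k)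
      have h1 : t * |β k v| < 1 := by
        have : t * |β k v| < t₀ * (1 + ∑ k', |β k' v|) := by
          rcases eq_or_lt_of_le (abs_nonneg (β k v)) with h0 | h0
          · rw [← h0, mul_zero]; positivity
          · apply mul_lt_mul' (le_of_lt ht2) (by linarith) (le_of_lt h0) ht₀pos
        rw [ht₀, one_div, inv_mul_cancel₀ (by positivity)] at this
        exact this
      have := neg_abs_le (β k v)
      nlinarith
    have hnotU := facet_covered hD hdual hDeq m hx0 hxpos
    rw [arrU, Set.notMem_compl_iff] at hnotU
    obtain ⟨H, hHA, hxH⟩ := Set.mem_iUnion₂.1 hnotU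
    exact htbad (Set.mem_iUnion.2 ⟨⟨H, hHA⟩, hxH⟩)
  obtain ⟨H, hHA, hle⟩ := hstep
  obtain ⟨f, hf, hfk⟩ := hhyp H hHA
  have h1 : Module.finrank ℝ ↥(LinearMap.ker (β m)) + 1 = ℓ :=
    finrank_ker_functional (nonzero_of_dual hdual m)
  have h2 : Module.finrank ℝ ↥H + 1 = ℓ := by
    rw [hfk]; exact finrank_ker_functional hf
  have heq := Submodule.eq_of_le_of_finrank_le hle (by omega)
  rwa [heq]

lemma closure_cone_eq {β : Fin ℓ → ((Fin ℓ → ℝ) →ₗ[ℝ] ℝ)} {e' : Module.Basis (Fin ℓ) ℝ (Fin ℓ → ℝ)}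
    (hdual : ∀ j k, β j (e' k) = if j = k then 1 else 0) :
    closure {x | ∀ m, 0 < β m x} = {x | ∀ m, 0 ≤ β m x} := by
  apply cone_closure (p := ∑ k, e' k)
  intro j
  rw [map_sum, Finset.sum_congr rfl (fun k _ => hdual j k),
    Finset.sum_ite_eq Finset.univ j (fun _ => (1:ℝ)), if_pos (Finset.mem_univ j)]

lemma wall_dim {β : Fin ℓ → ((Fin ℓ → ℝ) →ₗ[ℝ] ℝ)} {e' : Module.Basis (Fin ℓ) ℝ (Fin ℓ → ℝ)}
    (hdual : ∀ j k, β j (e' k) = if j = k then 1 else 0)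
    {D : Set (Fin ℓ → ℝ)} (hDeq : D = {x | ∀ m, 0 < β m x}) (m : Fin ℓ) :
    Module.finrank ℝ
      ↥(Submodule.span ℝ ((LinearMap.ker (β m) : Set (Fin ℓ → ℝ)) ∩ closure D)) + 1 = ℓ := by
  classical
  have hker : Submodule.span ℝ ((LinearMap.ker (β m) : Set (Fin ℓ → ℝ)) ∩ closure D)
      = LinearMap.ker (β m) := by
    apply le_antisymm
    · rw [Submodule.span_le]
      exact fun x hx => hx.1
    · intro x hx
      have hxe : x = ∑ k, β k x • e' k := eq_sum_dual hdual x
      have hx' : x = ∑ k ∈ Finset.univ.erase m, β k x • e' k := by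
        conv_lhs => rw [hxe]
        rw [← Finset.sum_erase_add Finset.univ _ (Finset.mem_univ m)]
        rw [LinearMap.mem_ker.1 hx, zero_smul, add_zero]
      rw [hx']
      apply Submodule.sum_mem
      intro k hk
      have hkm : k ≠ m := (Finset.mem_erase.1 hk).1
      apply Submodule.smul_mem
      apply Submodule.subset_span
      constructor
      · show e' k ∈ LinearMap.ker (β m)
        rw [LinearMap.mem_ker, hdual m k, if_neg (Ne.symm hkm)]
      · rw [hDeq, closure_cone_eq hdual]
        intro j
        rw [hdual j k]
        split <;> norm_num
  rw [hker]
  exact finrank_ker_functional (nonzero_of_dual hdual m)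

lemma wall_is_facet {A : Finset (Submodule ℝ (Fin ℓ → ℝ))}
    (hhyp : ∀ H ∈ A, IsLinHyperplane H) {D : Set (Fin ℓ → ℝ)} (hD : IsChamberOf A D)
    {β : Fin ℓ → ((Fin ℓ → ℝ) →ₗ[ℝ] ℝ)} {e' : Module.Basis (Fin ℓ) ℝ (Fin ℓ → ℝ)}
    (hdual : ∀ j k, β j (e' k) = if j = k then 1 else 0)
    (hDeq : D = {x | ∀ m, 0 < β m x})
    {H : Submodule ℝ (Fin ℓ → ℝ)} (hwall : IsWallOf A D H) :
    ∃ m, H = LinearMap.ker (β m) := by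
  classical
  obtain ⟨hHA, hdim⟩ := hwall
  rw [Module.finrank_fin_fun] at hdim
  set W : Set (Fin ℓ → ℝ) := (H : Set (Fin ℓ → ℝ)) ∩ closure D with hW
  have hWpos : ∀ x ∈ W, ∀ k, 0 ≤ β k x := by
    intro x hx k
    have := hx.2
    rw [hDeq, closure_cone_eq hdual] at this
    exact this k
  have hex : ∃ m, ∀ x ∈ W, β m x = 0 := by
    by_contra hcon
    push_neg at hcon
    choose xs hxs hne using hcon
    set zz := ∑ k, xs k with hzz
    have hzH : zz ∈ H := Submodule.sum_mem _ (fun k _ => (hxs k).1)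
    have hzD : zz ∈ D := by
      rw [hDeq]
      intro k
      rw [hzz, map_sum]
      apply Finset.sum_pos' (fun j _ => hWpos _ (hxs j) k)
      exact ⟨k, Finset.mem_univ k, lt_of_le_of_ne (hWpos _ (hxs k) k) (Ne.symm (hne k))⟩
    exact arrU_disjoint hHA (chamber_subset_arrU hD hzD) hzH
  obtain ⟨m, hm⟩ := hex
  refine ⟨m, ?_⟩
  have hspan_le_ker : Submodule.span ℝ W ≤ LinearMap.ker (β m) :=
    Submodule.span_le.2 (fun x hx => LinearMap.mem_ker.2 (hm x hx))
  have hspan_le_H : Submodule.span ℝ W ≤ H :=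
    Submodule.span_le.2 (fun x hx => hx.1)
  have hk1 : Module.finrank ℝ ↥(LinearMap.ker (β m)) + 1 = ℓ :=
    finrank_ker_functional (nonzero_of_dual hdual m)
  obtain ⟨f, hf, hfk⟩ := hhyp H hHA
  have hk2 : Module.finrank ℝ ↥H + 1 = ℓ := by
    rw [hfk]; exact finrank_ker_functional hf
  have e1 : Submodule.span ℝ W = LinearMap.ker (β m) :=
    Submodule.eq_of_le_of_finrank_le hspan_le_ker (by omega)
  have e2 : Submodule.span ℝ W = H :=
    Submodule.eq_of_le_of_finrank_le hspan_le_H (by omega)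
  rw [← e1, e2]

lemma chamber_cone_repr {A : Finset (Submodule ℝ (Fin ℓ → ℝ))} (hsimp : IsSimplicialArr A)
    {D : Set (Fin ℓ → ℝ)} (hD : IsChamberOf A D) :
    ∃ b : Module.Basis (Fin ℓ) ℝ (Fin ℓ → ℝ), ∀ x, x ∈ D ↔ ∀ m, 0 < b.repr x m := by
  obtain ⟨b₀, hb₀⟩ := hsimp D hD
  have hn : Module.finrank ℝ (Fin ℓ → ℝ) = ℓ := Module.finrank_fin_fun ℝ
  set ee : Fin (Module.finrank ℝ (Fin ℓ → ℝ)) ≃ Fin ℓ := finCongr hn with hee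
  refine ⟨b₀.reindex ee, ?_⟩
  intro x
  constructor
  · intro hx
    rw [hb₀] at hx
    obtain ⟨c, hc, rfl⟩ := hx
    have h1 : ∑ i, c i • b₀ i = ∑ k, c (ee.symm k) • (b₀.reindex ee) k := by
      rw [← Equiv.sum_comp ee.symm (fun i => c i • b₀ i)]
      exact Finset.sum_congr rfl (fun k _ => by rw [Module.Basis.reindex_apply])
    rw [h1, Module.Basis.repr_sum_self]
    intro m
    exact hc _
  · intro hx
    rw [hb₀]
    refine ⟨fun i => (b₀.reindex ee).repr x (ee i), fun i => hx _, ?_⟩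
    conv_lhs => rw [← (b₀.reindex ee).sum_repr x]
    rw [← Equiv.sum_comp ee (fun k => (b₀.reindex ee).repr x k • (b₀.reindex ee) k)]
    apply Finset.sum_congr rfl
    intro i _
    rw [Module.Basis.reindex_apply]
    simp

lemma exists_chamber_basis {A : Finset (Submodule ℝ (Fin ℓ → ℝ))}
    (hhyp : ∀ H ∈ A, IsLinHyperplane H) (hsimp : IsSimplicialArr A)
    {D : Set (Fin ℓ → ℝ)} (hD : IsChamberOf A D) :
    ∃ (β : Fin ℓ → ((Fin ℓ → ℝ) →ₗ[ℝ] ℝ)) (e' : Module.Basis (Fin ℓ) ℝ (Fin ℓ → ℝ)),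
      (∀ j k, β j (e' k) = if j = k then 1 else 0) ∧
      D = {x | ∀ m, 0 < β m x} ∧ IsChamberBasis A D β := by
  classical
  obtain ⟨b, hb⟩ := chamber_cone_repr hsimp hD
  set β : Fin ℓ → ((Fin ℓ → ℝ) →ₗ[ℝ] ℝ) := fun m => b.coord m with hβ
  have hdual : ∀ j k, β j (b k) = if j = k then 1 else 0 := by
    intro j k
    simp [hβ, Module.Basis.coord_apply, Module.Basis.repr_self, Finsupp.single_apply, eq_comm]
  have hDeq : D = {x | ∀ m, 0 < β m x} := by
    ext x
    rw [hb x]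
    simp [hβ, Module.Basis.coord_apply]
  refine ⟨β, b, hdual, hDeq, ?_, ?_, ?_, ?_⟩
  · intro i
    refine ⟨facet_ker_mem hhyp hD hdual hDeq i, ?_⟩
    rw [Module.finrank_fin_fun]
    exact wall_dim hdual hDeq i
  · intro H hH
    exact wall_is_facet hhyp hD hdual hDeq hH
  · intro m k hmk
    by_contra hne
    have h1 : b k ∈ LinearMap.ker (β k) := by
      simp only at hmk
      rw [← hmk]
      rw [LinearMap.mem_ker, hdual m k, if_neg hne]
    rw [LinearMap.mem_ker, hdual k k, if_pos rfl] at h1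
    norm_num at h1
  · rw [hDeq]
    ext x
    simp [Set.mem_iInter]

lemma exists_eps {ι : Type*} {s : Finset ι} {a b : ι → ℝ} (ha : ∀ j ∈ s, 0 < a j) :
    ∃ ε > 0, ∀ j ∈ s, ε * |b j| ≤ a j := by
  classical
  rcases s.eq_empty_or_nonempty with rfl | hs
  · exact ⟨1, one_pos, by simp⟩
  · refine ⟨s.inf' hs (fun j => a j / (|b j| + 1)), ?_, ?_⟩
    · show 0 < s.inf' hs fun j => a j / (|b j| + 1)
      rw [Finset.lt_inf'_iff]
      intro j hj
      have : (0:ℝ) < |b j| + 1 := by positivity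
      exact div_pos (ha j hj) this
    · intro j hj
      have h1 : s.inf' hs (fun j => a j / (|b j| + 1)) ≤ a j / (|b j| + 1) :=
        Finset.inf'_le _ hj
      have hb : (0:ℝ) ≤ |b j| := abs_nonneg _
      have h2 : a j / (|b j| + 1) * |b j| ≤ a j := by
        rw [div_mul_eq_mul_div, div_le_iff₀ (by positivity)]
        nlinarith [ha j hj]
      calc s.inf' hs (fun j => a j / (|b j| + 1)) * |b j|
          ≤ a j / (|b j| + 1) * |b j| := mul_le_mul_of_nonneg_right h1 hb
        _ ≤ a j := h2

lemma chamber_sign {A : Finset (Submodule ℝ (Fin ℓ → ℝ))} {D : Set (Fin ℓ → ℝ)}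
    (hD : IsChamberOf A D) {f : (Fin ℓ → ℝ) →ₗ[ℝ] ℝ} (hfA : LinearMap.ker f ∈ A) :
    (∀ x ∈ D, 0 < f x) ∨ (∀ x ∈ D, f x < 0) := by
  by_contra hcon
  push_neg at hcon
  obtain ⟨⟨a, ha, hfa⟩, ⟨c, hc, hfc⟩⟩ := hcon
  have hnz : ∀ x ∈ D, f x ≠ 0 := fun x hx h0 =>
    arrU_disjoint hfA (chamber_subset_arrU hD hx) (LinearMap.mem_ker.2 h0)
  have hIV := (chamber_preconnected hD).intermediate_value ha hc
    (f := f) (Continuous.continuousOn f.continuous_of_finiteDimensional)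
  have h0 : (0:ℝ) ∈ Set.Icc (f a) (f c) := ⟨hfa, hfc⟩
  obtain ⟨x, hx, hfx⟩ := hIV h0
  exact hnz x hx hfx

lemma relint_avoid {A : Finset (Submodule ℝ (Fin ℓ → ℝ))}
    (hhyp : ∀ H ∈ A, IsLinHyperplane H) {C : Set (Fin ℓ → ℝ)} (hC : IsChamberOf A C)
    {α : Fin ℓ → ((Fin ℓ → ℝ) →ₗ[ℝ] ℝ)} {e : Module.Basis (Fin ℓ) ℝ (Fin ℓ → ℝ)}
    (hdual : ∀ j k, α j (e k) = if j = k then 1 else 0)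
    (hCeq : C = {x | ∀ j, 0 < α j x}) (i : Fin ℓ)
    {H : Submodule ℝ (Fin ℓ → ℝ)} (hHA : H ∈ A) (hne : H ≠ LinearMap.ker (α i))
    {z : Fin ℓ → ℝ} (hz0 : α i z = 0) (hzpos : ∀ j, j ≠ i → 0 < α j z) : z ∉ H := by
  classical
  intro hzH
  obtain ⟨f, hf, hfk⟩ := hhyp H hHA
  have key : ∀ g : (Fin ℓ → ℝ) →ₗ[ℝ] ℝ, g ≠ 0 → LinearMap.ker g = H →
      (∀ x ∈ C, 0 < g x) → False := by
    intro g hg hkerg hgpos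
    have hclos : ∀ x ∈ closure C, 0 ≤ g x := by
      intro x hx
      have hsub : C ⊆ {y | 0 ≤ g y} := fun y hy => le_of_lt (hgpos y hy)
      exact closure_minimal hsub
        (isClosed_le continuous_const g.continuous_of_finiteDimensional) hx
    have hgz : g z = 0 := by
      have : z ∈ LinearMap.ker g := by rw [hkerg]; exact hzH
      exact LinearMap.mem_ker.1 this
    have hker_sub : LinearMap.ker (α i) ≤ LinearMap.ker g := by
      intro w hw
      have hiw : α i w = 0 := LinearMap.mem_ker.1 hw
      obtain ⟨ε, hε, hεle⟩ := exists_eps (s := Finset.univ.erase i)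
        (a := fun j => α j z) (b := fun j => α j w)
        (fun j hj => hzpos j (Finset.mem_erase.1 hj).1)
      have hmem : ∀ s : ℝ, |s| ≤ ε → z + s • w ∈ closure C := by
        intro s hs
        rw [hCeq, closure_cone_eq hdual]
        intro j
        rw [map_add, map_smul, smul_eq_mul]
        by_cases hj : j = i
        · subst hj; rw [hz0, hiw, mul_zero, add_zero]
        · have h1 : ε * |α j w| ≤ α j z :=
            hεle j (Finset.mem_erase.2 ⟨hj, Finset.mem_univ j⟩)
          have h2 : |s * α j w| ≤ ε * |α j w| := by
            rw [abs_mul]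
            exact mul_le_mul_of_nonneg_right hs (abs_nonneg _)
          have := neg_abs_le (s * α j w)
          linarith
      have hp := hclos _ (hmem ε (by rw [abs_of_pos hε]))
      have hm := hclos _ (hmem (-ε) (by rw [abs_neg, abs_of_pos hε]))
      rw [map_add, map_smul, smul_eq_mul, hgz, zero_add] at hp hm
      have : ε * g w = 0 := by nlinarith
      rcases mul_eq_zero.1 this with h | h
      · exact absurd h (ne_of_gt hε)
      · exact LinearMap.mem_ker.2 h
    have h1 : Module.finrank ℝ ↥(LinearMap.ker (α i)) + 1 = ℓ :=
      finrank_ker_functional (nonzero_of_dual hdual i)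
    have h2 : Module.finrank ℝ ↥(LinearMap.ker g) + 1 = ℓ :=
      finrank_ker_functional hg
    have := Submodule.eq_of_le_of_finrank_le hker_sub (by omega)
    rw [hkerg] at this
    exact hne this.symm
  rcases chamber_sign hC (hfk ▸ hHA : LinearMap.ker f ∈ A) with hpos | hneg
  · exact key f hf hfk.symm hpos
  · refine key (-f) (by simpa using hf) ?_ (fun x hx => by simpa using hneg x hx)
    rw [show LinearMap.ker (-f) = LinearMap.ker f from by ext x; simp, hfk]

lemma exists_zstar {α : Fin ℓ → ((Fin ℓ → ℝ) →ₗ[ℝ] ℝ)} {e : Module.Basis (Fin ℓ) ℝ (Fin ℓ → ℝ)}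
    (hdual : ∀ j k, α j (e k) = if j = k then 1 else 0) (i : Fin ℓ)
    {S : Set (Fin ℓ → ℝ)}
    (hspan : Submodule.span ℝ S = LinearMap.ker (α i))
    (hSC : ∀ x ∈ S, ∀ j, 0 ≤ α j x)
    {P : Set (Fin ℓ → ℝ)} (hSP : S ⊆ P)
    (hPadd : ∀ x ∈ P, ∀ y ∈ P, x + y ∈ P) (hP0 : (0 : Fin ℓ → ℝ) ∈ P) :
    ∃ z, α i z = 0 ∧ (∀ j, j ≠ i → 0 < α j z) ∧ z ∈ P := by
  classical
  -- find a finite subset T of S spanning ker (α i)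
  set K := LinearMap.ker (α i) with hK
  have hfd : FiniteDimensional ℝ ↥K := inferInstance
  set c := Module.finBasis ℝ ↥K with hc
  have hmem : ∀ t, ((c t : ↥K) : Fin ℓ → ℝ) ∈ Submodule.span ℝ S := by
    intro t
    rw [hspan]
    exact (c t).2
  have hfin : ∀ t, ∃ T : Finset (Fin ℓ → ℝ), ↑T ⊆ S ∧
      ((c t : ↥K) : Fin ℓ → ℝ) ∈ Submodule.span ℝ (↑T : Set (Fin ℓ → ℝ)) := by
    intro t
    obtain ⟨T, hT1, hT2⟩ := Submodule.mem_span_finite_of_mem_span (hmem t)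
    exact ⟨T, hT1, hT2⟩
  choose Ts hTs1 hTs2 using hfin
  set T : Finset (Fin ℓ → ℝ) := Finset.univ.biUnion Ts with hT
  have hTS : ↑T ⊆ S := by
    intro x hx
    rw [hT] at hx
    simp only [Finset.coe_biUnion, Set.mem_iUnion, Finset.mem_coe] at hx
    obtain ⟨t, _, hxt⟩ := hx
    exact hTs1 t hxt
  have hspanT : K ≤ Submodule.span ℝ (↑T : Set (Fin ℓ → ℝ)) := by
    intro x hxK
    -- x is a combination of the basis c
    have hxspan : x ∈ Submodule.span ℝ (Set.range (fun t => ((c t : ↥K) : Fin ℓ → ℝ))) := by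
      have h1 : (⟨x, hxK⟩ : ↥K) ∈ (⊤ : Submodule ℝ ↥K) := Submodule.mem_top
      rw [← c.span_eq] at h1
      have h2 := Submodule.mem_map_of_mem (f := K.subtype) h1
      rw [Submodule.map_span] at h2
      have : K.subtype '' Set.range ⇑c = Set.range fun t => ((c t : ↥K) : Fin ℓ → ℝ) := by
        ext y
        simp [Submodule.coe_subtype]
      rw [this] at h2
      exact h2
    refine Submodule.span_le.2 ?_ hxspan
    rintro y ⟨t, rfl⟩
    exact Submodule.span_mono
      (Finset.coe_subset.2 (Finset.subset_biUnion_of_mem Ts (Finset.mem_univ t))) (hTs2 t)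
  set z := ∑ x ∈ T, x with hz
  have hzspan : z ∈ Submodule.span ℝ S :=
    Submodule.sum_mem _ (fun x hx => Submodule.subset_span (hTS hx))
  have hzi : α i z = 0 := by
    rw [hspan] at hzspan
    exact LinearMap.mem_ker.1 hzspan
  have hznn : ∀ j, 0 ≤ α j z := by
    intro j
    rw [hz, map_sum]
    exact Finset.sum_nonneg (fun x hx => hSC x (hTS hx) j)
  have hzP : z ∈ P := by
    rw [hz]
    classical
    refine Finset.sum_induction _ (· ∈ P) (fun a b ha hb => hPadd a ha b hb) hP0 ?_
    intro x hx
    exact hSP (hTS hx)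
  refine ⟨z, hzi, ?_, hzP⟩
  intro j hj
  rcases eq_or_lt_of_le (hznn j) with h0 | h
  · exfalso
    -- α j vanishes on T, hence on span T ⊇ K = ker (α i)
    have hTj : ∀ x ∈ T, α j x = 0 := by
      have hsum : ∑ x ∈ T, α j x = 0 := by
        rw [← map_sum, ← hz, ← h0]
      intro x hx
      have := (Finset.sum_eq_zero_iff_of_nonneg (fun x hx => hSC x (hTS hx) j)).1 hsum
      exact this x hx
    have hKle : K ≤ LinearMap.ker (α j) := by
      intro x hxK
      have := hspanT hxK
      refine Submodule.span_le.2 ?_ this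
      intro y hy
      exact LinearMap.mem_ker.2 (hTj y hy)
    have h1 : Module.finrank ℝ ↥K + 1 = ℓ := by
      rw [hK]; exact finrank_ker_functional (nonzero_of_dual hdual i)
    have h2 : Module.finrank ℝ ↥(LinearMap.ker (α j)) + 1 = ℓ :=
      finrank_ker_functional (nonzero_of_dual hdual j)
    have heq : K = LinearMap.ker (α j) :=
      Submodule.eq_of_le_of_finrank_le hKle (by omega)
    have hej : e j ∈ K := by
      rw [hK]
      exact LinearMap.mem_ker.2 (by rw [hdual i j, if_neg (Ne.symm hj)])
    rw [heq] at hej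
    have hcontra := LinearMap.mem_ker.1 hej
    rw [hdual j j, if_pos rfl] at hcontra
    norm_num at hcontra
  · exact h

lemma exists_ball_avoid {A : Finset (Submodule ℝ (Fin ℓ → ℝ))}
    (h : Submodule ℝ (Fin ℓ → ℝ)) {z : Fin ℓ → ℝ}
    (hz : ∀ H ∈ A, H ≠ h → z ∉ H) :
    ∃ r > 0, ∀ y ∈ Metric.ball z r, ∀ H ∈ A, H ≠ h → y ∉ H := by
  classical
  set K : Set (Fin ℓ → ℝ) := ⋃ H ∈ A.filter (fun H => H ≠ h), (H : Set (Fin ℓ → ℝ)) with hK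
  have hKclosed : IsClosed K :=
    Set.Finite.isClosed_biUnion (Finset.finite_toSet _)
      (fun H _ => H.closed_of_finiteDimensional)
  have hzK : z ∉ K := by
    intro hzK
    obtain ⟨H, hH, hzH⟩ := Set.mem_iUnion₂.1 hzK
    obtain ⟨hHA, hHh⟩ := Finset.mem_filter.1 hH
    exact hz H hHA hHh hzH
  obtain ⟨r, hr, hball⟩ := Metric.isOpen_iff.1 hKclosed.isOpen_compl z hzK
  refine ⟨r, hr, ?_⟩
  intro y hy H hHA hHh hyH
  exact hball hy (Set.mem_iUnion₂.2 ⟨H, Finset.mem_filter.2 ⟨hHA, hHh⟩, hyH⟩)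

lemma chamber_neg_side {A : Finset (Submodule ℝ (Fin ℓ → ℝ))}
    (hhyp : ∀ H ∈ A, IsLinHyperplane H) {C C' : Set (Fin ℓ → ℝ)}
    (hC : IsChamberOf A C) (hC' : IsChamberOf A C') (hne : C' ≠ C)
    {α : Fin ℓ → ((Fin ℓ → ℝ) →ₗ[ℝ] ℝ)} {e : Module.Basis (Fin ℓ) ℝ (Fin ℓ → ℝ)}
    (hdual : ∀ j k, α j (e k) = if j = k then 1 else 0)
    (hCeq : C = {x | ∀ j, 0 < α j x}) (i : Fin ℓ)
    (hiA : LinearMap.ker (α i) ∈ A)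
    {α' : Fin ℓ → ((Fin ℓ → ℝ) →ₗ[ℝ] ℝ)} {e' : Module.Basis (Fin ℓ) ℝ (Fin ℓ → ℝ)}
    (hdual' : ∀ j k, α' j (e' k) = if j = k then 1 else 0)
    (hC'eq : C' = {x | ∀ m, 0 < α' m x})
    (hspan : Submodule.span ℝ (closure C ∩ closure C') = LinearMap.ker (α i)) :
    ∀ x ∈ C', α i x < 0 := by
  rcases chamber_sign hC' hiA with hpos | hneg
  swap
  · exact hneg
  exfalso
  have hCc : closure C = {x | ∀ j, 0 ≤ α j x} := by
    rw [hCeq]; exact closure_cone_eq hdual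
  have hC'c : closure C' = {x | ∀ m, 0 ≤ α' m x} := by
    rw [hC'eq]; exact closure_cone_eq hdual'
  obtain ⟨z, hz0, hzpos, hzP⟩ := exists_zstar hdual i hspan
    (fun x hx j => by rw [hCc] at hx; exact hx.1 j)
    (Set.Subset.refl _)
    (fun x hx y hy => by
      constructor
      · rw [hCc] at hx hy ⊢
        intro j; have := hx.1 j; have := hy.1 j
        rw [map_add]; linarith [hx.1 j, hy.1 j]
      · rw [hC'c] at hx hy ⊢
        intro m; rw [map_add]; linarith [hx.2 m, hy.2 m])
    (by constructor
        · rw [hCc]; intro j; rw [map_zero]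
        · rw [hC'c]; intro m; rw [map_zero])
  obtain ⟨r, hr, hball⟩ := exists_ball_avoid (LinearMap.ker (α i))
    (fun H hHA hHh => relint_avoid hhyp hC hdual hCeq i hHA hHh hz0 hzpos)
  set Bp : Set (Fin ℓ → ℝ) := Metric.ball z r ∩ {x | 0 < α i x} with hBp
  have hBpU : Bp ⊆ arrU A := by
    intro y hy
    rw [arrU, Set.mem_compl_iff]
    intro hmem
    obtain ⟨H, hHA, hyH⟩ := Set.mem_iUnion₂.1 hmem
    by_cases hHh : H = LinearMap.ker (α i)
    · subst hHh
      have : α i y = 0 := LinearMap.mem_ker.1 hyH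
      have := hy.2
      rw [Set.mem_setOf_eq] at this
      linarith
    · exact hball y hy.1 H hHA hHh hyH
  have hBpconn : IsPreconnected Bp := by
    apply Convex.isPreconnected
    exact (convex_ball z r).inter (convex_halfSpace_gt ⟨fun a b => map_add _ a b,
      fun c a => map_smul (α i) c a⟩ 0)
  obtain ⟨y₁, hy₁ball, hy₁C⟩ : ∃ y₁, y₁ ∈ Metric.ball z r ∧ y₁ ∈ C := by
    have hzcl : z ∈ closure C := hzP.1
    obtain ⟨y₁, h1, h2⟩ := mem_closure_iff.1 hzcl _ Metric.isOpen_ball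
      (Metric.mem_ball_self hr)
    exact ⟨y₁, h1, h2⟩
  obtain ⟨y₂, hy₂ball, hy₂C'⟩ : ∃ y₂, y₂ ∈ Metric.ball z r ∧ y₂ ∈ C' := by
    have hzcl : z ∈ closure C' := hzP.2
    obtain ⟨y₂, h1, h2⟩ := mem_closure_iff.1 hzcl _ Metric.isOpen_ball
      (Metric.mem_ball_self hr)
    exact ⟨y₂, h1, h2⟩
  have hy₁Bp : y₁ ∈ Bp := ⟨hy₁ball, by
    rw [hCeq] at hy₁C; exact hy₁C i⟩
  have hy₂Bp : y₂ ∈ Bp := ⟨hy₂ball, hpos y₂ hy₂C'⟩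
  have hsubC : Bp ⊆ C := preconnected_subset_chamber hC hBpconn hBpU hy₁Bp hy₁C
  have hy₂C : y₂ ∈ C := hsubC hy₂Bp
  have h1 := chamber_eq_componentIn hC hy₂C
  have h2 := chamber_eq_componentIn hC' hy₂C'
  exact hne (by rw [← h1, ← h2])

lemma facet_subset_closure {A : Finset (Submodule ℝ (Fin ℓ → ℝ))}
    (hhyp : ∀ H ∈ A, IsLinHyperplane H) {C C' : Set (Fin ℓ → ℝ)}
    (hC : IsChamberOf A C) (hC' : IsChamberOf A C')
    {α : Fin ℓ → ((Fin ℓ → ℝ) →ₗ[ℝ] ℝ)} {e : Module.Basis (Fin ℓ) ℝ (Fin ℓ → ℝ)}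
    (hdual : ∀ j k, α j (e k) = if j = k then 1 else 0)
    (hCeq : C = {x | ∀ j, 0 < α j x}) (i : Fin ℓ)
    {α' : Fin ℓ → ((Fin ℓ → ℝ) →ₗ[ℝ] ℝ)} {e' : Module.Basis (Fin ℓ) ℝ (Fin ℓ → ℝ)}
    (hdual' : ∀ j k, α' j (e' k) = if j = k then 1 else 0)
    (hC'eq : C' = {x | ∀ m, 0 < α' m x})
    (hspan : Submodule.span ℝ (closure C ∩ closure C') = LinearMap.ker (α i))
    (hneg : ∀ x ∈ C', α i x < 0) :
    {x | α i x = 0 ∧ ∀ j, 0 ≤ α j x} ⊆ closure C' := by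
  classical
  have hCc : closure C = {x | ∀ j, 0 ≤ α j x} := by
    rw [hCeq]; exact closure_cone_eq hdual
  have hC'c : closure C' = {x | ∀ m, 0 ≤ α' m x} := by
    rw [hC'eq]; exact closure_cone_eq hdual'
  set R : Set (Fin ℓ → ℝ) := {z | α i z = 0 ∧ ∀ j, j ≠ i → 0 < α j z} with hR
  have hRavoid : ∀ z ∈ R, ∀ H ∈ A, H ≠ LinearMap.ker (α i) → z ∉ H := by
    intro z hz H hHA hHh
    exact relint_avoid hhyp hC hdual hCeq i hHA hHh hz.1 hz.2
  have hrad : ∀ z ∈ R, ∃ r > 0, ∀ y ∈ Metric.ball z r, ∀ H ∈ A,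
      H ≠ LinearMap.ker (α i) → y ∉ H := by
    intro z hz
    exact exists_ball_avoid _ (hRavoid z hz)
  choose! r hrpos hrball using hrad
  have hnormpos : (0:ℝ) < ‖e i‖ + 1 := by positivity
  -- the negative part of the ball around z
  set Bneg : (Fin ℓ → ℝ) → Set (Fin ℓ → ℝ) :=
    fun z => Metric.ball z (r z) ∩ {x | α i x < 0} with hBneg
  have hBnegU : ∀ z ∈ R, Bneg z ⊆ arrU A := by
    intro z hz y hy
    rw [arrU, Set.mem_compl_iff]
    intro hmem
    obtain ⟨H, hHA, hyH⟩ := Set.mem_iUnion₂.1 hmem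
    by_cases hHh : H = LinearMap.ker (α i)
    · subst hHh
      have h0 : α i y = 0 := LinearMap.mem_ker.1 hyH
      have := hy.2
      rw [Set.mem_setOf_eq] at this
      linarith
    · exact hrball z hz y hy.1 H hHA hHh hyH
  have hBnegconn : ∀ z, IsPreconnected (Bneg z) := by
    intro z
    apply Convex.isPreconnected
    exact (convex_ball z (r z)).inter (convex_halfSpace_lt ⟨fun a b => map_add _ a b,
      fun c a => map_smul (α i) c a⟩ 0)
  have hmem_Bneg : ∀ z ∈ R, ∀ s : ℝ, 0 < s → s * (‖e i‖ + 1) < r z →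
      z - s • e i ∈ Bneg z := by
    intro z hz s hs hsr
    constructor
    · rw [Metric.mem_ball, dist_eq_norm]
      have : z - s • e i - z = -(s • e i) := by abel
      rw [this, norm_neg, norm_smul, Real.norm_eq_abs, abs_of_pos hs]
      nlinarith [norm_nonneg (e i), hs]
    · rw [Set.mem_setOf_eq, map_sub, map_smul, hz.1, hdual i i, if_pos rfl,
        smul_eq_mul, mul_one, zero_sub]
      linarith
  -- the chamber below z
  set κ : (Fin ℓ → ℝ) → ℝ := fun z => r z / (2 * (‖e i‖ + 1)) with hκ
  have hκpos : ∀ z ∈ R, 0 < κ z := by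
    intro z hz
    rw [hκ]
    exact div_pos (hrpos z hz) (by positivity)
  have hκlt : ∀ z ∈ R, κ z * (‖e i‖ + 1) < r z := by
    intro z hz
    rw [hκ, div_mul_eq_mul_div]
    rw [div_lt_iff₀ (by positivity : (0:ℝ) < 2 * (‖e i‖ + 1))]
    nlinarith [hrpos z hz, hnormpos]
  set D : (Fin ℓ → ℝ) → Set (Fin ℓ → ℝ) :=
    fun z => connectedComponentIn (arrU A) (z - κ z • e i) with hD
  have hBD : ∀ z ∈ R, Bneg z ⊆ D z := by
    intro z hz
    exact (hBnegconn z).subset_connectedComponentIn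
      (hmem_Bneg z hz (κ z) (hκpos z hz) (hκlt z hz)) (hBnegU z hz)
  have hDeqcomp : ∀ z ∈ R, ∀ w ∈ Bneg z, connectedComponentIn (arrU A) w = D z := by
    intro z hz w hw
    exact (connectedComponentIn_eq (hBD z hz hw)).symm
  -- overlapping balls give the same lower chamber
  have hoverlap : ∀ z₁ ∈ R, ∀ z₂ ∈ R, ∀ y ∈ R,
      y ∈ Metric.ball z₁ (r z₁ / 2) → y ∈ Metric.ball z₂ (r z₂ / 2) → D z₁ = D z₂ := by
    intro z₁ hz₁ z₂ hz₂ y hy hb₁ hb₂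
    set s : ℝ := min (r z₁) (r z₂) / (2 * (‖e i‖ + 1)) with hs
    have hrmin : 0 < min (r z₁) (r z₂) := lt_min (hrpos z₁ hz₁) (hrpos z₂ hz₂)
    have hspos : 0 < s := by rw [hs]; positivity
    have hw : ∀ z' ∈ R, y ∈ Metric.ball z' (r z' / 2) → min (r z₁) (r z₂) ≤ r z' →
        y - s • e i ∈ Bneg z' := by
      intro z' hz' hyz' hmin
      constructor
      · rw [Metric.mem_ball]
        calc dist (y - s • e i) z' ≤ dist (y - s • e i) y + dist y z' := dist_triangle _ _ _
          _ < s * ‖e i‖ + r z' / 2 := by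
              apply add_lt_add_of_le_of_lt _ (Metric.mem_ball.1 hyz')
              have : y - s • e i - y = -(s • e i) := by abel
              rw [dist_eq_norm, this, norm_neg, norm_smul, Real.norm_eq_abs,
                abs_of_pos hspos]
          _ ≤ r z' := by
              have h1 : s * ‖e i‖ ≤ s * (‖e i‖ + 1) := by nlinarith [hspos]
              have h2 : s * (‖e i‖ + 1) ≤ r z' / 2 := by
                rw [hs, div_mul_eq_mul_div, div_le_div_iff₀ (by positivity) two_pos]
                nlinarith [hnormpos]
              linarith
      · rw [Set.mem_setOf_eq, map_sub, map_smul, hy.1, hdual i i, if_pos rfl,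
          smul_eq_mul, mul_one, zero_sub]
        linarith
    have hw₁ : y - s • e i ∈ Bneg z₁ := hw z₁ hz₁ hb₁ (min_le_left _ _)
    have hw₂ : y - s • e i ∈ Bneg z₂ := hw z₂ hz₂ hb₂ (min_le_right _ _)
    rw [← hDeqcomp z₁ hz₁ _ hw₁, ← hDeqcomp z₂ hz₂ _ hw₂]
  -- the distinguished point z∗
  obtain ⟨zs, hzs0, hzspos, hzsP⟩ := exists_zstar hdual i hspan
    (fun x hx j => by rw [hCc] at hx; exact hx.1 j)
    (Set.inter_subset_right)
    (fun x hx y hy => by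
      rw [hC'c] at hx hy ⊢
      intro m; rw [map_add]; linarith [hx m, hy m])
    (by rw [hC'c]; intro m; rw [map_zero])
  have hzsR : zs ∈ R := ⟨hzs0, hzspos⟩
  have hDzs : D zs = C' := by
    obtain ⟨y', hy'ball, hy'C'⟩ : ∃ y', y' ∈ Metric.ball zs (r zs) ∧ y' ∈ C' := by
      obtain ⟨y', h1, h2⟩ := mem_closure_iff.1 hzsP _ Metric.isOpen_ball
        (Metric.mem_ball_self (hrpos zs hzsR))
      exact ⟨y', h1, h2⟩
    have hy'B : y' ∈ Bneg zs := ⟨hy'ball, hneg y' hy'C'⟩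
    rw [← hDeqcomp zs hzsR y' hy'B]
    exact chamber_eq_componentIn hC' hy'C'
  -- R is preconnected
  have hRconv : Convex ℝ R := by
    intro x hx y hy a b ha hb hab
    constructor
    · rw [map_add, map_smul, map_smul, hx.1, hy.1, smul_eq_mul, smul_eq_mul]
      ring
    · intro j hj
      rw [map_add, map_smul, map_smul, smul_eq_mul, smul_eq_mul]
      rcases eq_or_lt_of_le ha with ha0 | ha0
      · have hb1 : b = 1 := by linarith
        rw [← ha0, hb1]
        simpa using hy.2 j hj
      · nlinarith [hx.2 j hj, hy.2 j hj]
  have hRconn : IsPreconnected R := hRconv.isPreconnected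
  -- all lower chambers along R are C'
  have hallC' : ∀ z ∈ R, D z = C' := by
    by_contra hcon
    push_neg at hcon
    obtain ⟨z₀, hz₀R, hz₀D⟩ := hcon
    set O₁ : Set (Fin ℓ → ℝ) := ⋃ z ∈ {z | z ∈ R ∧ D z = C'}, Metric.ball z (r z / 2)
      with hO₁
    set O₂ : Set (Fin ℓ → ℝ) := ⋃ z ∈ {z | z ∈ R ∧ D z ≠ C'}, Metric.ball z (r z / 2)
      with hO₂
    have hO₁open : IsOpen O₁ := isOpen_biUnion (fun z _ => Metric.isOpen_ball)
    have hO₂open : IsOpen O₂ := isOpen_biUnion (fun z _ => Metric.isOpen_ball)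
    have hcover : R ⊆ O₁ ∪ O₂ := by
      intro z hz
      by_cases hDz : D z = C'
      · exact Or.inl (Set.mem_biUnion ⟨hz, hDz⟩
          (Metric.mem_ball_self (by linarith [hrpos z hz])))
      · exact Or.inr (Set.mem_biUnion ⟨hz, hDz⟩
          (Metric.mem_ball_self (by linarith [hrpos z hz])))
    have hne₁ : (R ∩ O₁).Nonempty := ⟨zs, hzsR, Set.mem_biUnion ⟨hzsR, hDzs⟩
      (Metric.mem_ball_self (by linarith [hrpos zs hzsR]))⟩
    have hne₂ : (R ∩ O₂).Nonempty := ⟨z₀, hz₀R, Set.mem_biUnion ⟨hz₀R, hz₀D⟩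
      (Metric.mem_ball_self (by linarith [hrpos z₀ hz₀R]))⟩
    obtain ⟨y, hyR, hyO₁, hyO₂⟩ := hRconn O₁ O₂ hO₁open hO₂open hcover hne₁ hne₂
    obtain ⟨z₁, hz₁mem, hyb₁⟩ := Set.mem_iUnion₂.1 hyO₁
    obtain ⟨z₂, hz₂mem, hyb₂⟩ := Set.mem_iUnion₂.1 hyO₂
    have := hoverlap z₁ hz₁mem.1 z₂ hz₂mem.1 y hyR hyb₁ hyb₂
    rw [hz₁mem.2] at this
    exact hz₂mem.2 this.symm
  -- R lies in the closure of C'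
  have hRsub : R ⊆ closure C' := by
    intro z hz
    rw [mem_closure_iff]
    intro O hO hzO
    obtain ⟨δ, hδ, hδball⟩ := Metric.isOpen_iff.1 hO z hzO
    set s : ℝ := min (κ z) (δ / (2 * (‖e i‖ + 1))) with hs
    have hspos : 0 < s := lt_min (hκpos z hz) (by positivity)
    have hsκ : s ≤ κ z := min_le_left _ _
    have hw : z - s • e i ∈ Bneg z := by
      apply hmem_Bneg z hz s hspos
      calc s * (‖e i‖ + 1) ≤ κ z * (‖e i‖ + 1) :=
            mul_le_mul_of_nonneg_right hsκ (by positivity)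
        _ < r z := hκlt z hz
    have hwC' : z - s • e i ∈ C' := by
      rw [← hallC' z hz]
      exact hBD z hz hw
    refine ⟨z - s • e i, ?_, hwC'⟩
    apply hδball
    rw [Metric.mem_ball, dist_eq_norm]
    have : z - s • e i - z = -(s • e i) := by abel
    rw [this, norm_neg, norm_smul, Real.norm_eq_abs, abs_of_pos hspos]
    have h1 : s ≤ δ / (2 * (‖e i‖ + 1)) := min_le_right _ _
    have h2 : s * ‖e i‖ ≤ δ / (2 * (‖e i‖ + 1)) * ‖e i‖ :=
      mul_le_mul_of_nonneg_right h1 (norm_nonneg _)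
    have h3 : δ / (2 * (‖e i‖ + 1)) * ‖e i‖ < δ := by
      rw [div_mul_eq_mul_div, div_lt_iff₀ (by positivity)]
      nlinarith [norm_nonneg (e i)]
    linarith
  -- finally, F ⊆ closure R ⊆ closure C'
  intro x hx
  set w₀ : Fin ℓ → ℝ := ∑ k ∈ Finset.univ.erase i, e k with hw₀
  have hw₀i : α i w₀ = 0 := by
    rw [hw₀, map_sum]
    apply Finset.sum_eq_zero
    intro k hk
    rw [hdual i k, if_neg (Ne.symm (Finset.mem_erase.1 hk).1)]
  have hw₀j : ∀ j, j ≠ i → α j w₀ = 1 := by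
    intro j hj
    rw [hw₀, map_sum, Finset.sum_congr rfl (fun k _ => hdual j k),
      Finset.sum_ite_eq (Finset.univ.erase i) j (fun _ => (1:ℝ)),
      if_pos (Finset.mem_erase.2 ⟨hj, Finset.mem_univ j⟩)]
  have hseq : ∀ n : ℕ, x + (1 / ((n:ℝ) + 1)) • w₀ ∈ R := by
    intro n
    have hpos : (0:ℝ) < 1 / ((n:ℝ) + 1) := by positivity
    constructor
    · rw [map_add, map_smul, hx.1, hw₀i, smul_eq_mul, mul_zero, add_zero]
    · intro j hj
      rw [map_add, map_smul, hw₀j j hj, smul_eq_mul, mul_one]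
      linarith [hx.2 j]
  have htend : Filter.Tendsto (fun n : ℕ => x + (1 / ((n : ℝ) + 1)) • w₀)
      Filter.atTop (nhds x) := by
    have h0 : Filter.Tendsto (fun n : ℕ => (1 / ((n : ℝ) + 1))) Filter.atTop (nhds 0) :=
      tendsto_one_div_add_atTop_nhds_zero_nat
    have := (h0.smul_const w₀).const_add x
    simpa using this
  have : x ∈ closure R := mem_closure_of_tendsto htend
    (Filter.Eventually.of_forall hseq)
  have hsub := closure_mono hRsub
  rw [closure_closure] at hsub
  exact hsub this

lemma chamber_basis_dual {A : Finset (Submodule ℝ (Fin ℓ → ℝ))} (hsimp : IsSimplicialArr A)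
    {C : Set (Fin ℓ → ℝ)} (hC : IsChamberOf A C)
    {α : Fin ℓ → ((Fin ℓ → ℝ) →ₗ[ℝ] ℝ)} (hCeq : C = {x | ∀ j, 0 < α j x}) :
    ∃ e : Module.Basis (Fin ℓ) ℝ (Fin ℓ → ℝ), ∀ j k, α j (e k) = if j = k then 1 else 0 := by
  obtain ⟨b, hb⟩ := chamber_cone_repr hsimp hC
  apply exists_dual_basis_of_cone b α
  intro x
  have h1 := hb x
  rw [hCeq] at h1
  exact ⟨fun h => h1.mpr h, fun h => h1.mp h⟩

lemma chamber_nonempty {A : Finset (Submodule ℝ (Fin ℓ → ℝ))} {C : Set (Fin ℓ → ℝ)}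
    (hC : IsChamberOf A C) : C.Nonempty := by
  obtain ⟨x, hx, rfl⟩ := hC
  exact ⟨x, mem_connectedComponentIn hx⟩

set_option maxHeartbeats 1600000 in
theorem main_core {A : Finset (Submodule ℝ (Fin ℓ → ℝ))}
    (hhyp : ∀ H ∈ A, IsLinHyperplane H) (hsimp : IsSimplicialArr A)
    {C : Set (Fin ℓ → ℝ)} (hC : IsChamberOf A C)
    {α : Fin ℓ → ((Fin ℓ → ℝ) →ₗ[ℝ] ℝ)} (hα : IsChamberBasis A C α)
    (i : Fin ℓ) {C' : Set (Fin ℓ → ℝ)}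
    (hC' : IsAdjChamber A C C' (LinearMap.ker (α i))) :
    ∃ c : Fin ℓ → ℝ,
      IsChamberBasis A C' (fun j => α j - c j • α i) ∧
      (∀ j, j ≠ i → c j ≤ 0) ∧ 1 < c i ∧
      ∀ c' : Fin ℓ → ℝ,
        IsChamberBasis A C' (fun j => α j - c' j • α i) → ∀ j, j ≠ i → c' j = c j := by
  classical
  obtain ⟨hC'cham, hC'ne, hspan⟩ := hC'
  have hCeq : C = {x | ∀ j, 0 < α j x} := by
    rw [hα.2.2.2]; ext x; simp [Set.mem_iInter]
  obtain ⟨e, hdual⟩ := chamber_basis_dual hsimp hC hCeq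
  obtain ⟨α', e', hdual', hC'eq, hCB'⟩ := exists_chamber_basis hhyp hsimp hC'cham
  have hiA : LinearMap.ker (α i) ∈ A := (hα.1 i).1
  have hneg : ∀ x ∈ C', α i x < 0 :=
    chamber_neg_side hhyp hC hC'cham hC'ne hdual hCeq i hiA hdual' hC'eq hspan
  have hWC' : IsWallOf A C' (LinearMap.ker (α i)) := by
    refine ⟨hiA, ?_⟩
    rw [Module.finrank_fin_fun]
    have hW1 : closure C ∩ closure C' ⊆
        ((LinearMap.ker (α i) : Submodule ℝ (Fin ℓ → ℝ)) : Set (Fin ℓ → ℝ)) ∩ closure C' := by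
      intro x hx
      exact ⟨by rw [← hspan]; exact Submodule.subset_span hx, hx.2⟩
    have hle1 : LinearMap.ker (α i) ≤
        Submodule.span ℝ (((LinearMap.ker (α i) : Submodule ℝ (Fin ℓ → ℝ)) :
          Set (Fin ℓ → ℝ)) ∩ closure C') := by
      conv_lhs => rw [← hspan]
      exact Submodule.span_le.2 (fun x hx => Submodule.subset_span (hW1 hx))
    have hle2 : Submodule.span ℝ (((LinearMap.ker (α i) : Submodule ℝ (Fin ℓ → ℝ)) :
        Set (Fin ℓ → ℝ)) ∩ closure C') ≤ LinearMap.ker (α i) :=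
      Submodule.span_le.2 (fun x hx => hx.1)
    rw [le_antisymm hle2 hle1]
    exact finrank_ker_functional (nonzero_of_dual hdual i)
  obtain ⟨m₀, hm₀⟩ := hCB'.2.1 _ hWC'
  have hm₀A : LinearMap.ker (α' m₀) ∈ A := (hCB'.1 m₀).1
  have hspan' : Submodule.span ℝ (closure C' ∩ closure C) = LinearMap.ker (α' m₀) := by
    rw [Set.inter_comm, hspan, hm₀]
  have hneg' : ∀ x ∈ C, α' m₀ x < 0 :=
    chamber_neg_side hhyp hC'cham hC (fun h => hC'ne h.symm) hdual' hC'eq m₀ hm₀A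
      hdual hCeq hspan'
  have hFF' : {x | α i x = 0 ∧ ∀ j, 0 ≤ α j x} ⊆ closure C' :=
    facet_subset_closure hhyp hC hC'cham hdual hCeq i hdual' hC'eq hspan hneg
  have hF'F : {x | α' m₀ x = 0 ∧ ∀ m, 0 ≤ α' m x} ⊆ closure C :=
    facet_subset_closure hhyp hC'cham hC hdual' hC'eq m₀ hdual hCeq hspan' hneg'
  have hCc : closure C = {x | ∀ j, 0 ≤ α j x} := by
    rw [hCeq]; exact closure_cone_eq hdual
  have hC'c : closure C' = {x | ∀ m, 0 ≤ α' m x} := by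
    rw [hC'eq]; exact closure_cone_eq hdual'
  have hker_iff : ∀ x : Fin ℓ → ℝ, α i x = 0 ↔ α' m₀ x = 0 := by
    intro x
    constructor
    · intro h
      have : x ∈ LinearMap.ker (α' m₀) := hm₀ ▸ LinearMap.mem_ker.2 h
      exact LinearMap.mem_ker.1 this
    · intro h
      have : x ∈ LinearMap.ker (α i) := hm₀ ▸ LinearMap.mem_ker.2 h
      exact LinearMap.mem_ker.1 this
  set t : ℝ := α' m₀ (e i) with ht
  have hαm₀ : α' m₀ = t • α i := by
    apply Module.Basis.ext e
    intro k
    rw [LinearMap.smul_apply, smul_eq_mul, hdual i k]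
    by_cases hk : k = i
    · subst hk; rw [if_pos rfl, mul_one, ht]
    · rw [if_neg (fun h => hk h.symm), mul_zero]
      exact (hker_iff (e k)).1 (by rw [hdual i k, if_neg (fun h => hk h.symm)])
  obtain ⟨x', hx'⟩ := chamber_nonempty hC'cham
  have hx'pos : 0 < α' m₀ x' := by rw [hC'eq] at hx'; exact hx' m₀
  have hx'neg : α i x' < 0 := hneg x' hx'
  have htneg : t < 0 := by
    have hval : α' m₀ x' = t * α i x' := by rw [hαm₀]; rfl
    nlinarith
  -- the matrix over the complements of i and m₀
  set M : {m : Fin ℓ // m ≠ m₀} → {j : Fin ℓ // j ≠ i} → ℝ :=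
    fun m j => α' m.1 (e j.1) with hM
  have heF : ∀ j : Fin ℓ, j ≠ i → e j ∈ closure C' := by
    intro j hj
    apply hFF'
    refine ⟨by rw [hdual i j, if_neg (Ne.symm hj)], fun k => by
      rw [hdual k j]; split <;> norm_num⟩
  have hM1 : ∀ m j, 0 ≤ M m j := by
    intro m j
    have := heF j.1 j.2
    rw [hC'c] at this
    exact this m.1
  -- evaluation lemmas for x = ∑ c j • e j
  have hx_i : ∀ c : {j : Fin ℓ // j ≠ i} → ℝ, α i (∑ j, c j • e j.1) = 0 := by
    intro c
    rw [map_sum]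
    apply Finset.sum_eq_zero
    intro j _
    rw [map_smul, hdual i j.1, if_neg (Ne.symm j.2), smul_eq_mul, mul_zero]
  have hx_k : ∀ (c : {j : Fin ℓ // j ≠ i} → ℝ) (k : Fin ℓ) (hk : k ≠ i),
      α k (∑ j, c j • e j.1) = c ⟨k, hk⟩ := by
    intro c k hk
    rw [map_sum]
    rw [Finset.sum_eq_single (⟨k, hk⟩ : {j : Fin ℓ // j ≠ i})]
    · rw [map_smul, hdual k k, if_pos rfl, smul_eq_mul, mul_one]
    · intro j _ hjne
      rw [map_smul, hdual k j.1, if_neg (fun h => hjne (Subtype.ext h.symm)),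
        smul_eq_mul, mul_zero]
    · intro h
      exact absurd (Finset.mem_univ _) h
  have hx_m : ∀ (c : {j : Fin ℓ // j ≠ i} → ℝ) (m : {m : Fin ℓ // m ≠ m₀}),
      α' m.1 (∑ j, c j • e j.1) = ∑ j, M m j * c j := by
    intro c m
    rw [map_sum]
    apply Finset.sum_congr rfl
    intro j _
    rw [map_smul, smul_eq_mul, mul_comm, hM]
  have hM2 : ∀ c : {j : Fin ℓ // j ≠ i} → ℝ,
      (∀ j, 0 < c j) ↔ (∀ m, 0 < ∑ j, M m j * c j) := by
    intro c
    set x := ∑ j, c j • e j.1 with hx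
    have hxi : α i x = 0 := hx_i c
    have hxk : ∀ (k : Fin ℓ) (hk : k ≠ i), α k x = c ⟨k, hk⟩ := hx_k c
    have hxm : ∀ m : {m : Fin ℓ // m ≠ m₀}, α' m.1 x = ∑ j, M m j * c j := hx_m c
    constructor
    · intro hc m
      rw [← hxm m]
      have hxF : x ∈ {y | α i y = 0 ∧ ∀ j, 0 ≤ α j y} := by
        refine ⟨hxi, fun k => ?_⟩
        by_cases hk : k = i
        · subst hk; rw [hxi]
        · rw [hxk k hk]; exact le_of_lt (hc _)
      have hge : 0 ≤ α' m.1 x := by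
        have := hFF' hxF
        rw [hC'c] at this
        exact this m.1
      rcases eq_or_lt_of_le hge with h0 | h0
      · exfalso
        -- move a little towards -e' m
        have he'm_i : α i (e' m.1) = 0 := by
          refine (hker_iff (e' m.1)).2 ?_
          rw [hdual' m₀ m.1, if_neg (Ne.symm m.2)]
        obtain ⟨ε, hε, hεle⟩ := exists_eps (s := (Finset.univ : Finset {j : Fin ℓ // j ≠ i}))
          (a := fun j => c j) (b := fun j => α j.1 (e' m.1)) (fun j _ => hc j)
        have hyF : x - ε • e' m.1 ∈ {y | α i y = 0 ∧ ∀ j, 0 ≤ α j y} := by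
          constructor
          · rw [map_sub, map_smul, hxi, he'm_i, smul_eq_mul, mul_zero, sub_zero]
          · intro k
            rw [map_sub, map_smul, smul_eq_mul]
            by_cases hk : k = i
            · subst hk; rw [hxi, he'm_i, mul_zero, sub_zero]
            · rw [hxk k hk]
              have h1 := hεle ⟨k, hk⟩ (Finset.mem_univ _)
              have h2 : ε * α k (e' m.1) ≤ ε * |α k (e' m.1)| :=
                mul_le_mul_of_nonneg_left (le_abs_self _) (le_of_lt hε)
              linarith
        have := hFF' hyF
        rw [hC'c] at this
        have h2 := this m.1
        rw [map_sub, map_smul, ← h0, hdual' m.1 m.1, if_pos rfl, smul_eq_mul,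
          mul_one, zero_sub] at h2
        linarith
      · exact h0
    · intro hc j
      have hxF' : x ∈ {y | α' m₀ y = 0 ∧ ∀ m, 0 ≤ α' m y} := by
        constructor
        · rw [hαm₀, LinearMap.smul_apply, hxi, smul_eq_mul, mul_zero]
        · intro m
          by_cases hm : m = m₀
          · subst hm
            rw [hαm₀, LinearMap.smul_apply, hxi, smul_eq_mul, mul_zero]
          · rw [hxm ⟨m, hm⟩]
            exact le_of_lt (hc ⟨m, hm⟩)
      have hge : 0 ≤ c j := by
        have := hF'F hxF'
        rw [hCc] at this
        have h2 := this j.1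
        rwa [hxk j.1 j.2] at h2
      rcases eq_or_lt_of_le hge with h0 | h0
      · exfalso
        have hej0 : α' m₀ (e j.1) = 0 := by
          refine (hker_iff (e j.1)).1 ?_
          rw [hdual i j.1, if_neg (Ne.symm j.2)]
        obtain ⟨ε, hε, hεle⟩ := exists_eps
          (s := (Finset.univ : Finset {m : Fin ℓ // m ≠ m₀}))
          (a := fun m => α' m.1 x) (b := fun m => α' m.1 (e j.1))
          (fun m _ => by show 0 < α' m.1 x; rw [hxm m]; exact hc m)
        have hyF' : x - ε • e j.1 ∈ {y | α' m₀ y = 0 ∧ ∀ m, 0 ≤ α' m y} := by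
          constructor
          · rw [map_sub, map_smul, hxF'.1, hej0, smul_eq_mul, mul_zero, sub_zero]
          · intro m
            rw [map_sub, map_smul, smul_eq_mul]
            by_cases hm : m = m₀
            · subst hm; rw [hxF'.1, hej0, mul_zero, sub_zero]
            · have h1 := hεle ⟨m, hm⟩ (Finset.mem_univ _)
              have h2 : ε * α' m (e j.1) ≤ ε * |α' m (e j.1)| :=
                mul_le_mul_of_nonneg_left (le_abs_self _) (le_of_lt hε)
              have h3 : α' m x = α' (⟨m, hm⟩ : {m : Fin ℓ // m ≠ m₀}).1 x := rfl
              linarith [hεle ⟨m, hm⟩ (Finset.mem_univ _)]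
        have := hF'F hyF'
        rw [hCc] at this
        have h2 := this j.1
        rw [map_sub, map_smul, hxk j.1 j.2, ← h0, hdual j.1 j.1, if_pos rfl,
          smul_eq_mul, mul_one, zero_sub] at h2
        linarith
      · exact h0
  have hcard : Fintype.card {m : Fin ℓ // m ≠ m₀} = Fintype.card {j : Fin ℓ // j ≠ i} := by
    simp [Fintype.card_subtype_compl]
  obtain ⟨ρ, hρbij, hρ⟩ := mono_matrix M hM1 hM2 hcard
  -- sign of the e i coefficients
  set w₀ : Fin ℓ → ℝ := ∑ k ∈ Finset.univ.erase i, e k with hw₀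
  have hw₀k : ∀ j, α j w₀ = if j = i then 0 else 1 := by
    intro j
    rw [hw₀, map_sum]
    by_cases hj : j = i
    · subst hj
      rw [if_pos rfl]
      apply Finset.sum_eq_zero
      intro k hk
      rw [hdual j k, if_neg (Ne.symm (Finset.mem_erase.1 hk).1)]
    · rw [if_neg hj, Finset.sum_congr rfl (fun k _ => hdual j k),
        Finset.sum_ite_eq (Finset.univ.erase i) j (fun _ => (1:ℝ)),
        if_pos (Finset.mem_erase.2 ⟨hj, Finset.mem_univ j⟩)]
  have hw₀cl : w₀ ∈ closure C := by
    rw [hCc]; intro k; rw [hw₀k k]; split <;> norm_num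
  have heicl : e i ∈ closure C := by
    rw [hCc]; intro k; rw [hdual k i]; split <;> norm_num
  have hvalw₀ : ∀ j : {j : Fin ℓ // j ≠ i}, α' (ρ j).1 w₀ = M (ρ j) j := by
    intro j
    have hs : ∑ k ∈ Finset.univ.erase i, α' (ρ j).1 (e k) = α' (ρ j).1 (e j.1) :=
      Finset.sum_eq_single j.1
        (fun k hk hkj => (hρ j).2 ⟨k, (Finset.mem_erase.1 hk).1⟩
          (fun h => hkj (congrArg Subtype.val h)))
        (fun h => absurd (Finset.mem_erase.2 ⟨j.2, Finset.mem_univ _⟩) h)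
    rw [hw₀, map_sum, hs]
  have hue : ∀ j : {j : Fin ℓ // j ≠ i}, 0 ≤ α' (ρ j).1 (e i) := by
    intro j
    have hkerA : LinearMap.ker (α' (ρ j).1) ∈ A := (hCB'.1 _).1
    rcases chamber_sign hC hkerA with hpos | hneg2
    · have hcl : ∀ y ∈ closure C, 0 ≤ α' (ρ j).1 y := fun y hy =>
        closure_minimal (fun z hz => le_of_lt (hpos z hz))
          (isClosed_le continuous_const
            (α' (ρ j).1).continuous_of_finiteDimensional) hy
      exact hcl (e i) heicl
    · exfalso
      have hcl : ∀ y ∈ closure C, α' (ρ j).1 y ≤ 0 := fun y hy =>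
        closure_minimal (fun z hz => le_of_lt (hneg2 z hz))
          (isClosed_le (α' (ρ j).1).continuous_of_finiteDimensional
            continuous_const) hy
      have := hcl w₀ hw₀cl
      rw [hvalw₀ j] at this
      exact absurd this (not_le.2 (hρ j).1)
  -- the permutation σ and the data lam, cc
  set σ : Fin ℓ → Fin ℓ := fun j => if h : j = i then m₀ else (ρ ⟨j, h⟩).1 with hσ
  have hσi : σ i = m₀ := by rw [hσ]; simp
  have hσj : ∀ (j : Fin ℓ) (h : j ≠ i), σ j = (ρ ⟨j, h⟩).1 := by
    intro j h; rw [hσ]; simp [h]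
  have hσbij : Function.Bijective σ := by
    constructor
    · intro a b hab
      by_cases ha : a = i <;> by_cases hb : b = i
      · rw [ha, hb]
      · exfalso
        rw [ha, hσi, hσj b hb] at hab
        exact (ρ ⟨b, hb⟩).2 hab.symm
      · exfalso
        rw [hb, hσi, hσj a ha] at hab
        exact (ρ ⟨a, ha⟩).2 hab
      · rw [hσj a ha, hσj b hb] at hab
        have := hρbij.1 (Subtype.ext hab)
        exact congrArg Subtype.val this
    · intro m
      by_cases hm : m = m₀
      · exact ⟨i, by rw [hσi, hm]⟩
      · obtain ⟨j, hj⟩ := hρbij.2 ⟨m, hm⟩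
        refine ⟨j.1, ?_⟩
        rw [hσj j.1 j.2]
        exact congrArg Subtype.val hj
  set lam : Fin ℓ → ℝ := fun j =>
    if h : j = i then 1 else (M (ρ ⟨j, h⟩) ⟨j, h⟩)⁻¹ with hlam
  set cc : Fin ℓ → ℝ := fun j => if h : j = i then 1 - t
    else -(α' (ρ ⟨j, h⟩).1 (e i) * (M (ρ ⟨j, h⟩) ⟨j, h⟩)⁻¹) with hcc
  have hlampos : ∀ j, 0 < lam j := by
    intro j
    by_cases h : j = i
    · simp only [hlam, dif_pos h]; norm_num
    · simp only [hlam, dif_neg h]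
      exact inv_pos.2 (hρ ⟨j, h⟩).1
  have hccle : ∀ (j : Fin ℓ), j ≠ i → cc j ≤ 0 := by
    intro j h
    simp only [hcc, dif_neg h]
    exact neg_nonpos.2 (mul_nonneg (hue ⟨j, h⟩) (le_of_lt (inv_pos.2 (hρ ⟨j, h⟩).1)))
  have hkey : ∀ j, α j - cc j • α i = lam j • α' (σ j) := by
    intro j
    apply Module.Basis.ext e
    intro k
    rw [LinearMap.sub_apply, LinearMap.smul_apply, LinearMap.smul_apply,
      smul_eq_mul, smul_eq_mul]
    by_cases hj : j = i
    · subst hj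
      rw [hσi, hαm₀]
      simp only [LinearMap.smul_apply, smul_eq_mul, hcc, hlam, dif_pos rfl]
      ring
    · rw [hσj j hj]
      simp only [hcc, hlam, dif_neg hj]
      by_cases hk : k = i
      · subst hk
        rw [hdual j k, if_neg hj, hdual k k, if_pos rfl]
        have : α' (ρ ⟨j, hj⟩).1 (e k) = α' (ρ ⟨j, hj⟩).1 (e k) := rfl
        ring
      · by_cases hkj : k = j
        · subst hkj
          rw [hdual k k, if_pos rfl, hdual i k, if_neg (fun h => hj h.symm)]
          have hval : α' (ρ ⟨k, hj⟩).1 (e k) = M (ρ ⟨k, hj⟩) ⟨k, hj⟩ := rfl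
          rw [hval, mul_zero, sub_zero, inv_mul_cancel₀ (ne_of_gt (hρ ⟨k, hj⟩).1)]
        · rw [hdual j k, if_neg (fun h => hkj h.symm), hdual i k,
            if_neg (fun h => hk h.symm)]
          have hval : α' (ρ ⟨j, hj⟩).1 (e k) = M (ρ ⟨j, hj⟩) ⟨k, hk⟩ := rfl
          rw [hval, (hρ ⟨j, hj⟩).2 ⟨k, hk⟩ (fun h => hkj (congrArg Subtype.val h))]
          ring
  have hkerlam : ∀ j, LinearMap.ker (α j - cc j • α i) = LinearMap.ker (α' (σ j)) := by
    intro j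
    rw [hkey j]
    exact LinearMap.ker_smul _ _ (ne_of_gt (hlampos j))
  have hCBnew : IsChamberBasis A C' (fun j => α j - cc j • α i) := by
    refine ⟨?_, ?_, ?_, ?_⟩
    · intro j
      show IsWallOf A C' (LinearMap.ker (α j - cc j • α i))
      rw [hkerlam j]
      exact hCB'.1 (σ j)
    · intro H hH
      obtain ⟨m, hm⟩ := hCB'.2.1 H hH
      obtain ⟨j, hj⟩ := hσbij.2 m
      refine ⟨j, ?_⟩
      show H = LinearMap.ker (α j - cc j • α i)
      rw [hkerlam j, hj]
      exact hm
    · intro a b hab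
      simp only at hab
      rw [hkerlam a, hkerlam b] at hab
      exact hσbij.1 (hCB'.2.2.1 hab)
    · have hiff : ∀ (j : Fin ℓ) (x : Fin ℓ → ℝ),
          0 < (α j - cc j • α i) x ↔ 0 < α' (σ j) x := by
        intro j x
        rw [hkey j, LinearMap.smul_apply, smul_eq_mul]
        constructor
        · intro h
          nlinarith [hlampos j]
        · intro h
          exact mul_pos (hlampos j) h
      ext x
      simp only [Set.mem_iInter, Set.mem_setOf_eq]
      rw [hC'eq]
      simp only [Set.mem_setOf_eq]
      constructor
      · intro h j
        exact (hiff j x).2 (h (σ j))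
      · intro h m
        obtain ⟨j, hj⟩ := hσbij.2 m
        rw [← hj]
        exact (hiff j x).1 (h j)
  have hcci : 1 < cc i := by
    simp only [hcc, dif_pos rfl]
    linarith
  refine ⟨cc, hCBnew, hccle, hcci, ?_⟩
  -- uniqueness
  intro c' hc' j hj
  have hwall_j : IsWallOf A C' (LinearMap.ker (α j - cc j • α i)) := by
    have := hCBnew.1 j
    simpa using this
  obtain ⟨k, hk⟩ := hc'.2.1 _ hwall_j
  simp only at hk
  have hmemker : ∀ x, (α j - cc j • α i) x = 0 ↔ (α k - c' k • α i) x = 0 := by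
    intro x
    constructor
    · intro h
      have hx : x ∈ LinearMap.ker (α j - cc j • α i) := LinearMap.mem_ker.2 h
      rw [hk] at hx
      exact LinearMap.mem_ker.1 hx
    · intro h
      have hx : x ∈ LinearMap.ker (α k - c' k • α i) := LinearMap.mem_ker.2 h
      rw [← hk] at hx
      exact LinearMap.mem_ker.1 hx
  have hfe : ∀ (d : ℝ) (a l : Fin ℓ),
      (α a - d • α i) (e l) = (if a = l then (1:ℝ) else 0) - d * (if i = l then 1 else 0) := by
    intro d a l
    rw [LinearMap.sub_apply, LinearMap.smul_apply, smul_eq_mul, hdual, hdual]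
  have hkij : k = i ∨ k = j := by
    by_contra hcon
    push_neg at hcon
    have h1 : (α j - cc j • α i) (e k) = 0 := by
      rw [hfe, if_neg (fun h => hcon.2 h.symm), if_neg (fun h => hcon.1 h.symm)]
      ring
    have h2 := (hmemker (e k)).1 h1
    rw [hfe, if_pos rfl, if_neg (fun h => hcon.1 h.symm)] at h2
    norm_num at h2
  have hfw : (α j - cc j • α i) (e i + cc j • e j) = 0 := by
    rw [map_add, map_smul, smul_eq_mul, hfe, hfe, if_neg hj, if_pos rfl,
      if_pos rfl, if_neg (Ne.symm hj)]
    ring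
  have hgw := (hmemker _).1 hfw
  rcases hkij with hki | hkj
  · exfalso
    rw [hki] at hgw
    rw [map_add, map_smul, smul_eq_mul, hfe, hfe, if_pos rfl,
      if_neg (show ¬(i = j) from fun h => hj h.symm)] at hgw
    have hc'i : c' i = 1 := by nlinarith [hgw]
    have hzero : α i - c' i • α i = 0 := by
      rw [hc'i, one_smul]
      exact sub_self _
    have hjk : e j ∈ LinearMap.ker (α k - c' k • α i) := by
      rw [hki, hzero]
      simp
    rw [← hk] at hjk
    have hval := LinearMap.mem_ker.1 hjk
    rw [hfe, if_pos rfl, if_neg (Ne.symm hj)] at hval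
    norm_num at hval
  · subst hkj
    rw [map_add, map_smul, smul_eq_mul, hfe, hfe, if_neg hj, if_pos rfl,
      if_pos rfl, if_neg (Ne.symm hj)] at hgw
    ring_nf at hgw
    linarith [hgw]


end ArrAux

/-- Existence, sign and uniqueness of the coefficients `c^K_{ij}`: if `α` is a basis
for the chamber `K = C` and `C'` is the chamber adjacent to `C` across the wall `αᵢ^⊥`,
then there are reals `c j` such that `(α j - c j • α i)ⱼ` is a basis for `C'`;
for `j ≠ i` one has `c j ≤ 0` and `c j` is uniquely determined, while `c i > 1`. -/
theorem exists_unique_adjacent_coeffs (ℓ : ℕ)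
    (A : Finset (Submodule ℝ (Fin ℓ → ℝ)))
    (hhyp : ∀ H ∈ A, IsLinHyperplane H) (hsimp : IsSimplicialArr A)
    (C : Set (Fin ℓ → ℝ)) (hC : IsChamberOf A C)
    (α : Fin ℓ → ((Fin ℓ → ℝ) →ₗ[ℝ] ℝ)) (hα : IsChamberBasis A C α)
    (i : Fin ℓ) (C' : Set (Fin ℓ → ℝ))
    (hC' : IsAdjChamber A C C' (LinearMap.ker (α i))) :
    ∃ c : Fin ℓ → ℝ,
      IsChamberBasis A C' (fun j => α j - c j • α i) ∧
      (∀ j, j ≠ i → c j ≤ 0) ∧ 1 < c i ∧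
      ∀ c' : Fin ℓ → ℝ,
        IsChamberBasis A C' (fun j => α j - c' j • α i) → ∀ j, j ≠ i → c' j = c j := by
  exact ArrAux.main_core hhyp hsimp hC hα i hC'
end

section
/- Let A be a simplicial ℓ-arrangement in ℝ^ℓ, K a chamber with basis B^K = {α_1,…,α_ℓ}, and K_i an adjacent chamber with induced basis B^{K_i} = σ^K_i(B^K). Then for all 1 ≤ j ≤ ℓ one has c^{K_i}_{ij} = c^K_{ij}, and consequently σ^K_i ∘ σ^{K_i}_i = σ^{K_i}_i ∘ σ^K_i = id. -/
open scoped Classical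

private lemma nonneg_aux {a b : ℝ} (h : ∀ ε : ℝ, 0 < ε → 0 < a + ε * b) : 0 ≤ a := by
  by_contra hlt
  push_neg at hlt
  rcases le_or_gt b 0 with hb | hb
  · have := h 1 one_pos; nlinarith
  · have hε : 0 < -a / (2 * b) := by
      apply div_pos (by linarith) (by linarith)
    have := h _ hε
    have : -a / (2 * b) * b = -a / 2 := by field_simp
    nlinarith [h _ hε]

private lemma wall_point {ℓ : ℕ} (A : Finset (Submodule ℝ (Fin ℓ → ℝ)))
    (C : Set (Fin ℓ → ℝ)) (α : Fin ℓ → ((Fin ℓ → ℝ) →ₗ[ℝ] ℝ))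
    (hα : IsChamberBasis A C α) (hne : C.Nonempty) (j : Fin ℓ) :
    ∃ w, α j w = 0 ∧ (∀ k, 0 ≤ α k w) ∧ ∀ k, k ≠ j → 0 < α k w := by
  obtain ⟨hwall, -, hinj, hCeq⟩ := hα
  obtain ⟨v0, hv0⟩ := hne
  have hv0' : ∀ k, 0 < α k v0 := by
    intro k
    have := hCeq ▸ hv0
    exact Set.mem_iInter.mp this k
  have hane : ∀ k, α k ≠ 0 := by
    intro k hk
    have := hv0' k
    rw [hk] at this
    simp at this
  -- closure C is contained in all nonneg halfspaces
  have hcl : ∀ k, ∀ w ∈ closure C, 0 ≤ α k w := by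
    intro k w hw
    have hcont : Continuous (α k) := (α k).continuous_of_finiteDimensional
    have hsub : C ⊆ {v | 0 ≤ α k v} := by
      intro v hv
      have hv' : v ∈ ⋂ i, {v | 0 < α i v} := hCeq ▸ hv
      have h3 : (0:ℝ) < α k v := Set.mem_iInter.mp hv' k
      exact h3.le
    have hclosed : IsClosed {v : Fin ℓ → ℝ | 0 ≤ α k v} :=
      isClosed_le continuous_const hcont
    exact closure_minimal hsub hclosed hw
  -- finrank of kernels
  have hfr : Module.finrank ℝ (Fin ℓ → ℝ) = ℓ := Module.finrank_fin_fun ℝ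
  have hkerrank : ∀ k, Module.finrank ℝ (LinearMap.ker (α k)) + 1 = ℓ := by
    intro k
    have h1 := LinearMap.finrank_range_add_finrank_ker (α k)
    have hrtop : LinearMap.range (α k) = ⊤ := by
      rw [LinearMap.range_eq_top]
      intro y
      refine ⟨(y / α k v0) • v0, ?_⟩
      rw [map_smul, smul_eq_mul, div_mul_cancel₀ _ (hv0' k).ne']
    rw [hrtop] at h1
    simp [Module.finrank_self, hfr] at h1
    omega
  -- the wall condition
  obtain ⟨-, hspanrank⟩ := hwall j
  set S : Set (Fin ℓ → ℝ) := (LinearMap.ker (α j) : Set (Fin ℓ → ℝ)) ∩ closure C with hS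
  have hspanle : Submodule.span ℝ S ≤ LinearMap.ker (α j) :=
    Submodule.span_le.mpr (fun v hv => hv.1)
  have hspaneq : Submodule.span ℝ S = LinearMap.ker (α j) := by
    apply Submodule.eq_of_le_of_finrank_le hspanle
    have := hkerrank j
    omega
  obtain ⟨b, hbS, hbspan, hbind⟩ := exists_linearIndependent ℝ S
  have hbfin : b.Finite := hbind.setFinite
  refine ⟨∑ v ∈ hbfin.toFinset, v, ?_, ?_, ?_⟩
  · rw [map_sum]
    apply Finset.sum_eq_zero
    intro v hv
    exact (hbS (hbfin.mem_toFinset.mp hv)).1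
  · intro k
    rw [map_sum]
    apply Finset.sum_nonneg
    intro v hv
    exact hcl k v (hbS (hbfin.mem_toFinset.mp hv)).2
  · intro k hk
    have hnn : (0:ℝ) ≤ α k (∑ v ∈ hbfin.toFinset, v) := by
      rw [map_sum]
      exact Finset.sum_nonneg fun v hv => hcl k v (hbS (hbfin.mem_toFinset.mp hv)).2
    rcases lt_or_eq_of_le hnn with h | h
    · exact h
    · exfalso
      rw [map_sum] at h
      have hzero : ∀ v ∈ hbfin.toFinset, α k v = 0 := by
        rw [← Finset.sum_eq_zero_iff_of_nonneg
          (fun v hv => hcl k v (hbS (hbfin.mem_toFinset.mp hv)).2)]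
        exact h.symm
      have hble : Submodule.span ℝ b ≤ LinearMap.ker (α k) := by
        apply Submodule.span_le.mpr
        intro v hv
        exact hzero v (hbfin.mem_toFinset.mpr hv)
      rw [hbspan, hspaneq] at hble
      have : LinearMap.ker (α j) = LinearMap.ker (α k) := by
        apply Submodule.eq_of_le_of_finrank_le hble
        have := hkerrank j; have := hkerrank k; omega
      exact hk (hinj this.symm)

set_option maxHeartbeats 2000000 in
/-- `c^{K_i}_{ij} = c^K_{ij}`, and consequently `σ^K_i ∘ σ^{K_i}_i = id`:
crossing the wall `αᵢ^⊥` from the adjacent chamber back again gives the original basis. -/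
theorem adjacent_coeffs_involutive (ℓ : ℕ)
    (A : Finset (Submodule ℝ (Fin ℓ → ℝ)))
    (hhyp : ∀ H ∈ A, IsLinHyperplane H) (hsimp : IsSimplicialArr A)
    (C : Set (Fin ℓ → ℝ)) (hC : IsChamberOf A C)
    (α : Fin ℓ → ((Fin ℓ → ℝ) →ₗ[ℝ] ℝ)) (hα : IsChamberBasis A C α)
    (i : Fin ℓ) (C' : Set (Fin ℓ → ℝ))
    (hC' : IsAdjChamber A C C' (LinearMap.ker (α i)))
    (c : Fin ℓ → ℝ) (hci : c i = 2)
    (hcB : IsChamberBasis A C' (fun j => α j - c j • α i))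
    (C'' : Set (Fin ℓ → ℝ))
    (hC'' : IsAdjChamber A C' C'' (LinearMap.ker (α i - c i • α i)))
    (d : Fin ℓ → ℝ) (hdi : d i = 2)
    (hdB : IsChamberBasis A C''
      (fun j => (α j - c j • α i) - d j • (α i - c i • α i))) :
    (∀ j, d j = c j) ∧
      ∀ j, (α j - c j • α i) - d j • (α i - c i • α i) = α j := by
  classical
  set β : Fin ℓ → ((Fin ℓ → ℝ) →ₗ[ℝ] ℝ) :=
    fun j => (α j - c j • α i) - d j • (α i - c i • α i) with hβdef
  have hβ : ∀ j v, β j v = α j v + (d j - c j) * α i v := by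
    intro j v
    simp only [hβdef, LinearMap.sub_apply, LinearMap.smul_apply, smul_eq_mul, hci]
    ring
  have hβi : ∀ v, β i v = α i v := by
    intro v
    rw [hβ, hdi, hci]
    ring
  obtain ⟨x0, hx0F, hCeq⟩ := hC
  set F := (⋃ H ∈ A, (H : Set (Fin ℓ → ℝ)))ᶜ with hF
  have hCne : C.Nonempty := ⟨x0, hCeq ▸ mem_connectedComponentIn hx0F⟩
  have hCiInter : C = ⋂ j, {v | 0 < α j v} := hα.2.2.2
  have hC''iInter : C'' = ⋂ j, {v | 0 < β j v} := hdB.2.2.2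
  obtain ⟨w, hwi0, hwnn, hwpos⟩ := wall_point A C α hα hCne i
  obtain ⟨v0, hv0⟩ := hCne
  have hv0pos : ∀ k, 0 < α k v0 := by
    intro k
    have hv' : v0 ∈ ⋂ j, {v | 0 < α j v} := hCiInter ▸ hv0
    exact Set.mem_iInter.mp hv' k
  set e : Fin ℓ → ℝ := (α i v0)⁻¹ • v0 with he
  have hei : α i e = 1 := by
    rw [he, map_smul, smul_eq_mul, inv_mul_cancel₀ (hv0pos i).ne']
  -- eventually, w + ε • e lies in both C and C''
  have key : ∀ (g : (Fin ℓ → ℝ) →ₗ[ℝ] ℝ),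
      Filter.Tendsto (fun ε : ℝ => g (w + ε • e)) (nhdsWithin 0 (Set.Ioi 0)) (nhds (g w)) := by
    intro g
    have hcont : Continuous fun ε : ℝ => g (w + ε • e) :=
      g.continuous_of_finiteDimensional.comp (continuous_const.add (continuous_id.smul continuous_const))
    have h0 := hcont.tendsto 0
    simp only [zero_smul, add_zero] at h0
    exact h0.mono_left nhdsWithin_le_nhds
  have hev : ∀ j, ∀ᶠ ε in nhdsWithin (0:ℝ) (Set.Ioi 0),
      0 < α j (w + ε • e) ∧ 0 < β j (w + ε • e) := by
    intro j
    rcases eq_or_ne j i with rfl | hji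
    · have h1 : ∀ ε : ℝ, α j (w + ε • e) = ε := by
        intro ε
        rw [map_add, map_smul, smul_eq_mul, hwi0, hei]
        ring
      have h2 : ∀ ε : ℝ, β j (w + ε • e) = ε := by
        intro ε
        rw [hβ, hdi, hci, h1]
        ring
      filter_upwards [self_mem_nhdsWithin] with ε hε
      exact ⟨by rw [h1]; exact hε, by rw [h2]; exact hε⟩
    · have hwj : 0 < α j w := hwpos j hji
      have hβw : 0 < β j w := by rw [hβ, hwi0]; simpa using hwj
      have e1 := (key (α j)).eventually (eventually_gt_nhds hwj)
      have e2 := (key (β j)).eventually (eventually_gt_nhds hβw)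
      exact e1.and e2
  obtain ⟨ε, hεP⟩ := (Filter.eventually_all.mpr hev).exists
  set y := w + ε • e with hy
  have hyC : y ∈ C := by
    rw [hCiInter]
    exact Set.mem_iInter.mpr fun j => (hεP j).1
  have hyC'' : y ∈ C'' := by
    rw [hC''iInter]
    exact Set.mem_iInter.mpr fun j => (hεP j).2
  obtain ⟨z, hzF, hC''eq⟩ := hC''.1
  have hCC'' : C = C'' := by
    have h1 : connectedComponentIn F x0 = connectedComponentIn F y :=
      connectedComponentIn_eq (hCeq ▸ hyC)
    have h2 : connectedComponentIn F z = connectedComponentIn F y :=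
      connectedComponentIn_eq (hC''eq ▸ hyC'')
    rw [hCeq, hC''eq, h1, h2]
  have hC''ne : C''.Nonempty := ⟨y, hyC''⟩
  have hdc : ∀ j, d j = c j := by
    intro j
    rcases eq_or_ne j i with rfl | hji
    · rw [hdi, hci]
    · -- first inequality: d j - c j ≥ 0
      obtain ⟨wj, hwj0, hwjnn, hwjpos⟩ := wall_point A C α hα ⟨y, hyC⟩ j
      have hαiwj : 0 < α i wj := hwjpos i (Ne.symm hji)
      have hαjw : 0 < α j w := hwpos j hji
      have hmem : ∀ ε : ℝ, 0 < ε → (wj + ε • w) ∈ C := by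
        intro ε hε
        rw [hCiInter]
        refine Set.mem_iInter.mpr fun m => ?_
        show 0 < α m (wj + ε • w)
        rw [map_add, map_smul, smul_eq_mul]
        rcases eq_or_ne m j with rfl | hmj
        · rw [hwj0]
          simpa using mul_pos hε (hwpos m hji)
        · have := hwjpos m hmj
          have := mul_nonneg hε.le (hwnn m)
          linarith
      have hge : 0 ≤ (d j - c j) * α i wj := by
        apply nonneg_aux (b := α j w)
        intro ε hε
        have h3 : (wj + ε • w) ∈ C'' := hCC'' ▸ hmem ε hε
        rw [hC''iInter] at h3
        have h4 : 0 < β j (wj + ε • w) := Set.mem_iInter.mp h3 j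
        rw [hβ, map_add, map_add, map_smul, map_smul, smul_eq_mul, smul_eq_mul,
          hwj0, hwi0] at h4
        -- h4 : 0 < 0 + ε * α j w + (d j - c j) * (α i wj + ε * 0)
        have h5 : (0:ℝ) < (d j - c j) * α i wj + ε * α j w := by linarith [h4]
        linarith [h5]
      have hge' : 0 ≤ d j - c j := by
        by_contra hlt
        push_neg at hlt
        nlinarith
      -- second inequality: d j - c j ≤ 0, via wall points of C''
      obtain ⟨u, hui0, hunn, hupos⟩ := wall_point A C'' β hdB hC''ne i
      obtain ⟨uj, huj0, hujnn, hujpos⟩ := wall_point A C'' β hdB hC''ne j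
      have hβiuj : 0 < β i uj := hujpos i (Ne.symm hji)
      have hβju : 0 < β j u := hupos j hji
      have hmem' : ∀ ε : ℝ, 0 < ε → (uj + ε • u) ∈ C'' := by
        intro ε hε
        rw [hC''iInter]
        refine Set.mem_iInter.mpr fun m => ?_
        show 0 < β m (uj + ε • u)
        rw [map_add, map_smul, smul_eq_mul]
        rcases eq_or_ne m j with rfl | hmj
        · rw [huj0]
          simpa using mul_pos hε (hupos m hji)
        · have := hujpos m hmj
          have := mul_nonneg hε.le (hunn m)
          linarith
      have hle : 0 ≤ -(d j - c j) * β i uj := by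
        apply nonneg_aux (b := β j u)
        intro ε hε
        have h3 : (uj + ε • u) ∈ C := hCC''.symm ▸ hmem' ε hε
        rw [hCiInter] at h3
        have h4 : 0 < α j (uj + ε • u) := Set.mem_iInter.mp h3 j
        have hαform : ∀ v, α j v = β j v - (d j - c j) * β i v := by
          intro v
          rw [hβ, hβi]
          ring
        rw [hαform, map_add, map_add, map_smul, map_smul, smul_eq_mul, smul_eq_mul,
          huj0, hui0] at h4
        linarith [h4]
      have hle' : d j - c j ≤ 0 := by
        by_contra hlt
        push_neg at hlt
        nlinarith
      linarith
  refine ⟨hdc, fun j => ?_⟩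
  refine LinearMap.ext fun v => ?_
  rw [hβ, hdc j]
  ring
end

section
/- Let A be a simplicial ℓ-arrangement in ℝ^ℓ, K a chamber with basis B^K = {α_1,…,α_ℓ}, and K_i an adjacent chamber. If i ≠ j and c^K_{ij} = 0, then c^{K_i}_{jk} = c^K_{jk} for all k ∈ {1,…,ℓ}. -/
open scoped Classical

section AdjAux

variable {ℓ : ℕ}

private lemma adjaux_chamber_basic {A : Finset (Submodule ℝ (Fin ℓ → ℝ))} {D : Set (Fin ℓ → ℝ)}
    (hD : IsChamberOf A D) :
    D.Nonempty ∧ IsConnected D ∧ D ⊆ (⋃ H ∈ A, (H : Set (Fin ℓ → ℝ)))ᶜ := by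
  obtain ⟨x, hx, rfl⟩ := hD
  exact ⟨⟨x, mem_connectedComponentIn hx⟩, isConnected_connectedComponentIn_iff.mpr hx,
    connectedComponentIn_subset _ _⟩

/-- A linear form whose kernel is a hyperplane of `A` has constant sign on a chamber. -/
private lemma adjaux_sign_const {A : Finset (Submodule ℝ (Fin ℓ → ℝ))} {D : Set (Fin ℓ → ℝ)}
    (hD : IsChamberOf A D) (f : (Fin ℓ → ℝ) →ₗ[ℝ] ℝ) (hf : LinearMap.ker f ∈ A) :
    (∀ y ∈ D, 0 < f y) ∨ (∀ y ∈ D, f y < 0) := by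
  obtain ⟨⟨y0, hy0⟩, hconn, hsub⟩ := adjaux_chamber_basic hD
  have hne : ∀ y ∈ D, f y ≠ 0 := by
    intro y hy h0
    exact hsub hy (Set.mem_biUnion hf (by simpa [LinearMap.mem_ker] using h0))
  have hcont : ContinuousOn f D := f.continuous_of_finiteDimensional.continuousOn
  have key : ∀ y ∈ D, ∀ z ∈ D, 0 < f y → 0 < f z := by
    intro y hy z hz hfy
    rcases lt_trichotomy (f z) 0 with h | h | h
    · exfalso
      have h0 : (0 : ℝ) ∈ Set.Icc (f z) (f y) := ⟨le_of_lt h, le_of_lt hfy⟩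
      obtain ⟨w, hw, hw0⟩ := hconn.isPreconnected.intermediate_value hz hy hcont h0
      exact hne w hw hw0
    · exact absurd h (hne z hz)
    · exact h
  rcases lt_or_gt_of_ne (hne y0 hy0) with h | h
  · right
    intro y hy
    by_contra hpos
    push_neg at hpos
    have : 0 < f y := lt_of_le_of_ne hpos (Ne.symm (hne y hy))
    exact absurd (key y hy y0 hy0 this) (not_lt.mpr (le_of_lt h))
  · exact Or.inl fun y hy => key y0 hy0 y hy h

private lemma adjaux_pos_lim {c s : ℝ} (h : ∀ t : ℝ, 0 < t → 0 < c + t * s) : 0 ≤ c := by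
  by_contra hc
  push_neg at hc
  rcases le_or_gt s 0 with hs | hs
  · have := h 1 one_pos; nlinarith
  · have ht : (0 : ℝ) < -c / (2 * s) := div_pos (by linarith) (by linarith)
    have := h (-c / (2 * s)) ht
    have heq : -c / (2 * s) * s = -c / 2 := by field_simp
    rw [heq] at this
    linarith

/-- If a form positive on the open cone `⋂ {sₘ > 0}` is `c1·s_{m1}+c2·s_{m2}+c3·s_{m3}`,
then `c2 ≥ 0`. -/
private lemma adjaux_coeff_nonneg3 {s : Fin ℓ → ((Fin ℓ → ℝ) →ₗ[ℝ] ℝ)}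
    (hsolv : ∀ v : Fin ℓ → ℝ, ∃ x, ∀ m, s m x = v m)
    {m1 m2 m3 : Fin ℓ} (h1 : m1 ≠ m2) (h3 : m3 ≠ m2) {c1 c2 c3 : ℝ}
    (hpos : ∀ x, (∀ m, 0 < s m x) → 0 < c1 * s m1 x + c2 * s m2 x + c3 * s m3 x) :
    0 ≤ c2 := by
  apply adjaux_pos_lim (s := c1 + c3)
  intro t ht
  obtain ⟨x, hx⟩ := hsolv fun m => if m = m2 then 1 else t
  have h := hpos x (fun m => by rw [hx]; split <;> [exact one_pos; exact ht])
  rw [hx m1, hx m2, hx m3, if_pos rfl, if_neg h1, if_neg h3] at h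
  linarith

private lemma adjaux_coeff_nonneg2 {s : Fin ℓ → ((Fin ℓ → ℝ) →ₗ[ℝ] ℝ)}
    (hsolv : ∀ v : Fin ℓ → ℝ, ∃ x, ∀ m, s m x = v m)
    {m1 m2 : Fin ℓ} (h1 : m1 ≠ m2) {c1 c2 : ℝ}
    (hpos : ∀ x, (∀ m, 0 < s m x) → 0 < c1 * s m1 x + c2 * s m2 x) :
    0 ≤ c2 := by
  apply adjaux_pos_lim (s := c1)
  intro t ht
  obtain ⟨x, hx⟩ := hsolv fun m => if m = m2 then 1 else t
  have h := hpos x (fun m => by rw [hx]; split <;> [exact one_pos; exact ht])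
  rw [hx m1, hx m2, if_pos rfl, if_neg h1] at h
  linarith

/-- In a simplicial arrangement, the basis forms of a chamber are a basis of the dual:
one can prescribe their values arbitrarily. -/
private lemma adjaux_solv {A : Finset (Submodule ℝ (Fin ℓ → ℝ))}
    (hsimp : IsSimplicialArr A) {C : Set (Fin ℓ → ℝ)} (hC : IsChamberOf A C)
    {α : Fin ℓ → ((Fin ℓ → ℝ) →ₗ[ℝ] ℝ)} (hCeq : C = ⋂ m, {v | 0 < α m v}) :
    ∀ v : Fin ℓ → ℝ, ∃ x, ∀ m, α m x = v m := by
  have hinj : Function.Injective (LinearMap.pi α : (Fin ℓ → ℝ) →ₗ[ℝ] (Fin ℓ → ℝ)) := by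
    rw [← LinearMap.ker_eq_bot, Submodule.eq_bot_iff]
    intro u hu
    by_contra hu0
    have hαu : ∀ m, α m u = 0 := by
      intro m
      have := congrFun (congrArg (fun z => (z : Fin ℓ → ℝ)) (LinearMap.mem_ker.mp hu)) m
      simpa [LinearMap.pi_apply] using this
    obtain ⟨⟨x0, hx0⟩, -, -⟩ := adjaux_chamber_basic hC
    have hx0' : ∀ m, 0 < α m x0 := by
      intro m
      have := hx0
      rw [hCeq, Set.mem_iInter] at this
      exact this m
    have hline : ∀ t : ℝ, x0 + t • u ∈ C := by
      intro t
      rw [hCeq, Set.mem_iInter]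
      intro m
      simp only [Set.mem_setOf_eq, map_add, map_smul, hαu, smul_eq_mul, mul_zero, add_zero]
      exact hx0' m
    obtain ⟨b, hb⟩ := hsimp C hC
    have hrepr : b.repr u ≠ 0 := fun h => hu0 (by simpa using b.repr.map_eq_zero_iff.mp h)
    obtain ⟨m0, hm0⟩ : ∃ m0, b.repr u m0 ≠ 0 := by
      by_contra hall
      push_neg at hall
      exact hrepr (Finsupp.ext hall)
    set t0 : ℝ := (-1 - b.repr x0 m0) / (b.repr u m0) with ht0
    have hx1 : x0 + t0 • u ∈ C := hline t0
    rw [hb] at hx1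
    obtain ⟨c, hcpos, hcx⟩ := hx1
    have h1 : b.repr (x0 + t0 • u) m0 = c m0 := by
      rw [hcx]
      exact congrFun (b.repr_sum_self c) m0
    have h2 : b.repr (x0 + t0 • u) m0 = b.repr x0 m0 + t0 * b.repr u m0 := by
      simp [map_add, map_smul]
    have h3 : t0 * b.repr u m0 = -1 - b.repr x0 m0 := by
      rw [ht0]; field_simp
    have : c m0 = -1 := by rw [← h1, h2, h3]; ring
    have := hcpos m0
    linarith
  have hsurj := LinearMap.injective_iff_surjective.mp hinj
  intro v
  obtain ⟨x, hx⟩ := hsurj v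
  exact ⟨x, fun m => by rw [← LinearMap.pi_apply α x m, hx]⟩

end AdjAux


/-- If `c^K_{ij} = 0` (`i ≠ j`) then `c^{K_i}_{jk} = c^K_{jk}` for all `k`. -/
theorem adjacent_coeffs_of_orthogonal (ℓ : ℕ)
    (A : Finset (Submodule ℝ (Fin ℓ → ℝ)))
    (hhyp : ∀ H ∈ A, IsLinHyperplane H) (hsimp : IsSimplicialArr A)
    (C : Set (Fin ℓ → ℝ)) (hC : IsChamberOf A C)
    (α : Fin ℓ → ((Fin ℓ → ℝ) →ₗ[ℝ] ℝ)) (hα : IsChamberBasis A C α)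
    (i j : Fin ℓ) (hij : i ≠ j)
    -- the coefficients `c^K_{i·}` across the wall `αᵢ^⊥`
    (Ci : Set (Fin ℓ → ℝ)) (hCi : IsAdjChamber A C Ci (LinearMap.ker (α i)))
    (ci : Fin ℓ → ℝ) (hcii : ci i = 2)
    (hciB : IsChamberBasis A Ci (fun k => α k - ci k • α i))
    -- the coefficients `c^K_{j·}` across the wall `αⱼ^⊥`
    (Cj : Set (Fin ℓ → ℝ)) (hCj : IsAdjChamber A C Cj (LinearMap.ker (α j)))
    (cj : Fin ℓ → ℝ) (hcjj : cj j = 2)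
    (hcjB : IsChamberBasis A Cj (fun k => α k - cj k • α j))
    -- the coefficients `c^{K_i}_{j·}` of the adjacent chamber `K_i = Ci`
    (C' : Set (Fin ℓ → ℝ))
    (hC' : IsAdjChamber A Ci C' (LinearMap.ker (α j - ci j • α i)))
    (d : Fin ℓ → ℝ) (hdj : d j = 2)
    (hdB : IsChamberBasis A C'
      (fun k => (α k - ci k • α i) - d k • (α j - ci j • α i)))
    (hzero : ci j = 0) :
    ∀ k, d k = cj k := by
  -- basic facts
  have hji : j ≠ i := hij.symm
  have memC : ∀ x, (∀ m, 0 < α m x) → x ∈ C := by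
    intro x hx; rw [hα.2.2.2]; exact Set.mem_iInter.mpr hx
  have memCi : ∀ x, (∀ m, 0 < (α m - ci m • α i) x) → x ∈ Ci := by
    intro x hx; rw [hciB.2.2.2]; exact Set.mem_iInter.mpr hx
  have memCj : ∀ x, (∀ m, 0 < (α m - cj m • α j) x) → x ∈ Cj := by
    intro x hx; rw [hcjB.2.2.2]; exact Set.mem_iInter.mpr hx
  have memC' : ∀ x, (∀ m, 0 < ((α m - ci m • α i) - d m • (α j - ci j • α i)) x) → x ∈ C' := by
    intro x hx; rw [hdB.2.2.2]; exact Set.mem_iInter.mpr hx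
  -- evaluation lemmas
  have evη : ∀ (m : Fin ℓ) (y : Fin ℓ → ℝ), (α m - ci m • α i) y = α m y - ci m * α i y := by
    intro m y; simp [LinearMap.sub_apply, LinearMap.smul_apply, smul_eq_mul]
  have evγ : ∀ (m : Fin ℓ) (y : Fin ℓ → ℝ), (α m - cj m • α j) y = α m y - cj m * α j y := by
    intro m y; simp [LinearMap.sub_apply, LinearMap.smul_apply, smul_eq_mul]
  have evβ : ∀ (m : Fin ℓ) (y : Fin ℓ → ℝ),
      ((α m - ci m • α i) - d m • (α j - ci j • α i)) y
        = α m y - ci m * α i y - d m * α j y := by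
    intro m y
    simp only [LinearMap.sub_apply, LinearMap.smul_apply, smul_eq_mul, hzero, zero_mul,
      sub_zero]
  -- solvability for the basis of C
  have hsolvα : ∀ v : Fin ℓ → ℝ, ∃ x, ∀ m, α m x = v m :=
    adjaux_solv hsimp hC hα.2.2.2
  -- solvability for the basis of Ci
  have hsolvη : ∀ v : Fin ℓ → ℝ, ∃ x, ∀ m, (α m - ci m • α i) x = v m := by
    intro v
    obtain ⟨x, hx⟩ := hsolvα fun m => if m = i then -v i else v m - ci m * v i
    refine ⟨x, fun m => ?_⟩
    rw [evη, hx, hx]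
    by_cases hm : m = i
    · subst hm; rw [if_pos rfl, hcii]; ring
    · rw [if_neg hm, if_pos rfl]; ring
  -- Step 1 : d i = 0
  have hdi : d i = 0 := by
    have hgA : LinearMap.ker ((α i - ci i • α i) - d i • (α j - ci j • α i)) ∈ A := (hdB.1 i).1
    have h1 : 0 ≤ d i := by
      rcases adjaux_sign_const hC _ hgA with hp | hn
      · exfalso
        have habs : (0:ℝ) ≤ -1 := by
          refine adjaux_coeff_nonneg2 hsolvα (m1 := j) (m2 := i) hji
            (c1 := -(d i)) (c2 := -1) ?_
          intro x hx
          have hg := hp x (memC x hx)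
          rw [evβ, hcii] at hg
          exact lt_of_lt_of_eq hg (by ring)
        linarith
      · refine adjaux_coeff_nonneg2 hsolvα (m1 := i) (m2 := j) hij
          (c1 := 1) (c2 := d i) ?_
        intro x hx
        have hg := hn x (memC x hx)
        rw [evβ, hcii] at hg
        have hg' : 0 < -((α i - ci i • α i - d i • (α j - ci j • α i)) x) := by
          rw [evβ, hcii]; linarith
        exact lt_of_lt_of_eq (by linarith : (0:ℝ) < -(α i x - 2 * α i x - d i * α j x)) (by ring)
    have h2 : d i ≤ 0 := by
      rcases adjaux_sign_const hCi.1 _ hgA with hp | hn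
      · have habs : (0:ℝ) ≤ -(d i) := by
          refine adjaux_coeff_nonneg2 hsolvη (m1 := i) (m2 := j) hij
            (c1 := 1) (c2 := -(d i)) ?_
          intro x hx
          have hg := hp x (memCi x hx)
          rw [evβ, hcii] at hg
          rw [evη, evη, hcii, hzero]
          exact lt_of_lt_of_eq hg (by ring)
        linarith
      · exfalso
        have habs : (0:ℝ) ≤ -1 := by
          refine adjaux_coeff_nonneg2 hsolvη (m1 := j) (m2 := i) hji
            (c1 := d i) (c2 := -1) ?_
          intro x hx
          have hg := hn x (memCi x hx)
          rw [evβ, hcii] at hg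
          rw [evη, evη, hcii, hzero]
          exact lt_of_lt_of_eq (by linarith : (0:ℝ) < -(α i x - 2 * α i x - d i * α j x)) (by ring)
        linarith
    linarith
  -- Step 2 : cj i = 0
  have hcji : cj i = 0 := by
    have hgA : LinearMap.ker (α i - cj i • α j) ∈ A := (hcjB.1 i).1
    have h1 : cj i ≤ 0 := by
      rcases adjaux_sign_const hC _ hgA with hp | hn
      · have habs : (0:ℝ) ≤ -(cj i) := by
          refine adjaux_coeff_nonneg2 hsolvα (m1 := i) (m2 := j) hij
            (c1 := 1) (c2 := -(cj i)) ?_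
          intro x hx
          have hg := hp x (memC x hx)
          rw [evγ] at hg
          exact lt_of_lt_of_eq hg (by ring)
        linarith
      · exfalso
        have habs : (0:ℝ) ≤ -1 := by
          refine adjaux_coeff_nonneg2 hsolvα (m1 := j) (m2 := i) hji
            (c1 := cj i) (c2 := -1) ?_
          intro x hx
          have hg := hn x (memC x hx)
          rw [evγ] at hg
          exact lt_of_lt_of_eq (by linarith : (0:ℝ) < -(α i x - cj i * α j x)) (by ring)
        linarith
    have h2 : 0 ≤ cj i := by
      rcases adjaux_sign_const hCi.1 _ hgA with hp | hn
      · exfalso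
        have habs : (0:ℝ) ≤ -1 := by
          refine adjaux_coeff_nonneg2 hsolvη (m1 := j) (m2 := i) hji
            (c1 := -(cj i)) (c2 := -1) ?_
          intro x hx
          have hg := hp x (memCi x hx)
          rw [evγ] at hg
          rw [evη, evη, hcii, hzero]
          exact lt_of_lt_of_eq hg (by ring)
        linarith
      · refine adjaux_coeff_nonneg2 hsolvη (m1 := i) (m2 := j) hij
          (c1 := 1) (c2 := cj i) ?_
        intro x hx
        have hg := hn x (memCi x hx)
        rw [evγ] at hg
        rw [evη, evη, hcii, hzero]
        exact lt_of_lt_of_eq (by linarith : (0:ℝ) < -(α i x - cj i * α j x)) (by ring)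
    linarith
  -- solvability for the basis of Cj and of C'
  have hsolvγ : ∀ v : Fin ℓ → ℝ, ∃ x, ∀ m, (α m - cj m • α j) x = v m := by
    intro v
    obtain ⟨x, hx⟩ := hsolvα fun m => if m = j then -v j else v m - cj m * v j
    refine ⟨x, fun m => ?_⟩
    rw [evγ, hx, hx]
    by_cases hm : m = j
    · subst hm; rw [if_pos rfl, hcjj]; ring
    · rw [if_neg hm, if_pos rfl]; ring
  have hsolvβ : ∀ v : Fin ℓ → ℝ,
      ∃ x, ∀ m, ((α m - ci m • α i) - d m • (α j - ci j • α i)) x = v m := by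
    intro v
    obtain ⟨x, hx⟩ := hsolvα fun m =>
      if m = i then -v i else if m = j then -v j else v m - ci m * v i - d m * v j
    refine ⟨x, fun m => ?_⟩
    rw [evβ, hx, hx, hx]
    rw [if_pos rfl, if_neg hji, if_pos rfl]
    by_cases hm : m = i
    · subst hm; rw [if_pos rfl, hcii, hdi]; ring
    · rw [if_neg hm]
      by_cases hm' : m = j
      · subst hm'; rw [if_pos rfl, hzero, hdj]; ring
      · rw [if_neg hm']; ring
  -- main step
  intro k
  by_cases hki : k = i
  · subst hki; rw [hdi, hcji]
  by_cases hkj : k = j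
  · subst hkj; rw [hdj, hcjj]
  have hik : i ≠ k := fun h => hki h.symm
  have hjk : j ≠ k := fun h => hkj h.symm
  -- γ_k has constant sign on C'
  have h1 : d k ≤ cj k := by
    have hgA : LinearMap.ker (α k - cj k • α j) ∈ A := (hcjB.1 k).1
    rcases adjaux_sign_const hC'.1 _ hgA with hp | hn
    · have habs : (0:ℝ) ≤ cj k - d k := by
        refine adjaux_coeff_nonneg3 hsolvβ (m1 := k) (m2 := j) (m3 := i) hkj hij
          (c1 := 1) (c2 := cj k - d k) (c3 := -(ci k)) ?_
        intro x hx
        have hg := hp x (memC' x hx)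
        rw [evγ] at hg
        rw [evβ, evβ, evβ, hcii, hdi, hzero, hdj]
        exact lt_of_lt_of_eq hg (by ring)
      linarith
    · exfalso
      have habs : (0:ℝ) ≤ -1 := by
        refine adjaux_coeff_nonneg3 hsolvβ (m1 := i) (m2 := k) (m3 := j) hik hjk
          (c1 := ci k) (c2 := -1) (c3 := d k - cj k) ?_
        intro x hx
        have hg := hn x (memC' x hx)
        rw [evγ] at hg
        rw [evβ, evβ, evβ, hcii, hdi, hzero, hdj]
        exact lt_of_lt_of_eq (by linarith : (0:ℝ) < -(α k x - cj k * α j x)) (by ring)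
      linarith
  -- β_k has constant sign on Cj
  have h2 : cj k ≤ d k := by
    have hgA : LinearMap.ker ((α k - ci k • α i) - d k • (α j - ci j • α i)) ∈ A := (hdB.1 k).1
    rcases adjaux_sign_const hCj.1 _ hgA with hp | hn
    · have habs : (0:ℝ) ≤ d k - cj k := by
        refine adjaux_coeff_nonneg3 hsolvγ (m1 := k) (m2 := j) (m3 := i) hkj hij
          (c1 := 1) (c2 := d k - cj k) (c3 := -(ci k)) ?_
        intro x hx
        have hg := hp x (memCj x hx)
        rw [evβ] at hg
        rw [evγ, evγ, evγ, hcji, hcjj]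
        exact lt_of_lt_of_eq hg (by ring)
      linarith
    · exfalso
      have habs : (0:ℝ) ≤ -1 := by
        refine adjaux_coeff_nonneg3 hsolvγ (m1 := i) (m2 := k) (m3 := j) hik hjk
          (c1 := ci k) (c2 := -1) (c3 := cj k - d k) ?_
        intro x hx
        have hg := hn x (memCj x hx)
        rw [evβ] at hg
        rw [evγ, evγ, evγ, hcji, hcjj]
        exact lt_of_lt_of_eq (by linarith : (0:ℝ) < -(α k x - ci k * α i x - d k * α j x)) (by ring)
      linarith
  linarith
end
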